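/- Let 2 ≤ r ≤ n/2 and let 𝒜 be a pairwise intersecting family of r-element subsets of {1,...,n} with no common element (⋂𝒜 = ∅, i.e., there is no x in all members). Then |𝒜| ≤ C(n-1, r-1) - C(n-r-1, r-1) + 1. -/

import Mathlib

open Finset

set_option linter.unusedVariables false

namespace HM


/-- move element `j` of `A` to `i` (if possible) -/
def mv (i j : ℕ) (A : Finset ℕ) : Finset ℕ :=
  if j ∈ A ∧ i ∉ A then insert i (A.erase j) else A

/-- the `(i,j)` shift-compression of a family -/
def comp (i j : ℕ) (𝒜 : Finset (Finset ℕ)) : Finset (Finset ℕ) :=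
  𝒜.filter (fun A => mv i j A ∈ 𝒜) ∪ (𝒜.filter (fun A => mv i j A ∉ 𝒜)).image (mv i j)

def Sized (r : ℕ) (𝒜 : Finset (Finset ℕ)) : Prop := ∀ A ∈ 𝒜, A.card = r
def Bdd (n : ℕ) (𝒜 : Finset (Finset ℕ)) : Prop := ∀ A ∈ 𝒜, A ⊆ range n
def Cross (𝒜 ℬ : Finset (Finset ℕ)) : Prop := ∀ A ∈ 𝒜, ∀ B ∈ ℬ, (A ∩ B).Nonempty
def Shifted (𝒜 : Finset (Finset ℕ)) : Prop :=
  ∀ A ∈ 𝒜, ∀ j ∈ A, ∀ i < j, i ∉ A → insert i (A.erase j) ∈ 𝒜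
def meas (𝒜 : Finset (Finset ℕ)) : ℕ := ∑ A ∈ 𝒜, ∑ x ∈ A, x

variable {i j n r : ℕ} {𝒜 ℬ : Finset (Finset ℕ)} {A B : Finset ℕ}

lemma mv_of_moved (h : j ∈ A ∧ i ∉ A) : mv i j A = insert i (A.erase j) := if_pos h
lemma mv_of_not (h : ¬ (j ∈ A ∧ i ∉ A)) : mv i j A = A := if_neg h

lemma mv_card (hij : i ≠ j) : (mv i j A).card = A.card := by
  unfold mv; split_ifs with h
  · rw [card_insert_of_notMem (fun hi => h.2 (mem_of_mem_erase hi)),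
      card_erase_of_mem h.1]
    have : A.card ≠ 0 := by
      intro h0; rw [card_eq_zero] at h0; simp [h0] at h
    omega
  · rfl

lemma mv_subset_range (hA : A ⊆ range n) (hi : i < n) : mv i j A ⊆ range n := by
  unfold mv; split_ifs with h
  · intro x hx
    rcases mem_insert.1 hx with rfl | hx
    · exact mem_range.2 hi
    · exact hA (mem_of_mem_erase hx)
  · exact hA

lemma mv_ne_imp (h : mv i j A ≠ A) : j ∈ A ∧ i ∉ A := by
  by_contra hc; exact h (mv_of_not hc)

lemma sum_mv_lt (hij : i < j) (h : j ∈ A ∧ i ∉ A) :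
    ∑ x ∈ mv i j A, x < ∑ x ∈ A, x := by
  rw [mv_of_moved h, sum_insert (fun hi => h.2 (mem_of_mem_erase hi))]
  have h1 : j + ∑ x ∈ A.erase j, x = ∑ x ∈ A, x := Finset.add_sum_erase _ (fun x => x) h.1
  omega

/-- recover `A` from a moved image -/
lemma mv_inj_on_moved (hij : i ≠ j) (hA : j ∈ A ∧ i ∉ A) (hB : j ∈ B ∧ i ∉ B)
    (h : mv i j A = mv i j B) : A = B := by
  rw [mv_of_moved hA, mv_of_moved hB] at h
  have hAr : A = insert j ((insert i (A.erase j)).erase i) := by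
    rw [erase_insert (fun hi => hA.2 (mem_of_mem_erase hi)), insert_erase hA.1]
  have hBr : B = insert j ((insert i (B.erase j)).erase i) := by
    rw [erase_insert (fun hi => hB.2 (mem_of_mem_erase hi)), insert_erase hB.1]
  rw [hAr, hBr, h]

lemma mem_comp_cases (h : A ∈ comp i j 𝒜) :
    (A ∈ 𝒜 ∧ mv i j A ∈ 𝒜) ∨ (A ∉ 𝒜 ∧ ∃ B ∈ 𝒜, (j ∈ B ∧ i ∉ B) ∧ mv i j B = A) := by
  rcases mem_union.1 h with h | h
  · exact Or.inl (mem_filter.1 h |>.imp_right (fun x => x) |> fun ⟨a, b⟩ => ⟨a, b⟩)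
  · rcases mem_image.1 h with ⟨B, hB, hBA⟩
    rcases mem_filter.1 hB with ⟨hB𝒜, hmvB⟩
    right
    have hmoved : j ∈ B ∧ i ∉ B := by
      by_contra hc
      rw [mv_of_not hc] at hmvB; exact hmvB hB𝒜
    refine ⟨?_, B, hB𝒜, hmoved, hBA⟩
    rw [← hBA]; exact hmvB

lemma mem_comp_of_mem_of_fix (hA : A ∈ 𝒜) (h : mv i j A ∈ 𝒜) : A ∈ comp i j 𝒜 :=
  mem_union_left _ (mem_filter.2 ⟨hA, h⟩)

lemma mem_comp_of_mem_of_not (hA : A ∈ 𝒜) (h : mv i j A ∉ 𝒜) : mv i j A ∈ comp i j 𝒜 :=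
  mem_union_right _ (mem_image.2 ⟨A, mem_filter.2 ⟨hA, h⟩, rfl⟩)

lemma comp_card (hij : i ≠ j) : (comp i j 𝒜).card = 𝒜.card := by
  unfold comp
  rw [card_union_of_disjoint, card_image_of_injOn]
  · exact card_filter_add_card_filter_not (fun A => mv i j A ∈ 𝒜)
  · intro A hA B hB h
    simp only [coe_filter, Set.mem_setOf_eq] at hA hB
    have hAm : j ∈ A ∧ i ∉ A := by
      by_contra hc; rw [mv_of_not hc] at hA; exact hA.2 hA.1
    have hBm : j ∈ B ∧ i ∉ B := by
      by_contra hc; rw [mv_of_not hc] at hB; exact hB.2 hB.1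
    exact mv_inj_on_moved hij hAm hBm h
  · rw [disjoint_right]
    intro A hA hA2
    rcases mem_image.1 hA with ⟨B, hB, hBA⟩
    exact (mem_filter.1 hB).2 (hBA ▸ (mem_filter.1 hA2).1)

lemma comp_sized (hij : i ≠ j) (h : Sized r 𝒜) : Sized r (comp i j 𝒜) := by
  intro A hA
  rcases mem_comp_cases hA with ⟨h1, _⟩ | ⟨_, B, hB, _, hBA⟩
  · exact h A h1
  · rw [← hBA, mv_card hij]; exact h B hB

lemma comp_bdd (hi : i < n) (h : Bdd n 𝒜) : Bdd n (comp i j 𝒜) := by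
  intro A hA
  rcases mem_comp_cases hA with ⟨h1, _⟩ | ⟨_, B, hB, _, hBA⟩
  · exact h A h1
  · rw [← hBA]; exact mv_subset_range (h B hB) hi

lemma meas_comp_le (hij : i < j) : meas (comp i j 𝒜) ≤ meas 𝒜 := by
  unfold comp meas
  rw [sum_union, sum_image]
  · have h1 : ∑ A ∈ 𝒜.filter (fun A => mv i j A ∉ 𝒜), ∑ x ∈ mv i j A, x ≤
        ∑ A ∈ 𝒜.filter (fun A => mv i j A ∉ 𝒜), ∑ x ∈ A, x := by
      apply sum_le_sum
      intro A hA
      rcases mem_filter.1 hA with ⟨hA𝒜, hmv⟩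
      by_cases hc : j ∈ A ∧ i ∉ A
      · exact (sum_mv_lt hij hc).le
      · rw [mv_of_not hc]
    calc _ ≤ (∑ A ∈ 𝒜.filter (fun A => mv i j A ∈ 𝒜), ∑ x ∈ A, x) +
        ∑ A ∈ 𝒜.filter (fun A => mv i j A ∉ 𝒜), ∑ x ∈ A, x := by omega
    _ = _ := sum_filter_add_sum_filter_not _ _ _
  · intro A hA B hB h
    have hAm : j ∈ A ∧ i ∉ A := by
      have := mem_filter.1 hA; by_contra hc; rw [mv_of_not hc] at this; exact this.2 this.1
    have hBm : j ∈ B ∧ i ∉ B := by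
      have := mem_filter.1 hB; by_contra hc; rw [mv_of_not hc] at this; exact this.2 this.1
    exact mv_inj_on_moved hij.ne hAm hBm h
  · rw [disjoint_right]
    intro A hA hA2
    rcases mem_image.1 hA with ⟨B, hB, hBA⟩
    exact (mem_filter.1 hB).2 (hBA ▸ (mem_filter.1 hA2).1)

lemma meas_comp_lt (hij : i < j) (hA : A ∈ 𝒜) (hjA : j ∈ A) (hiA : i ∉ A)
    (hmv : insert i (A.erase j) ∉ 𝒜) : meas (comp i j 𝒜) < meas 𝒜 := by
  have hmv' : mv i j A ∉ 𝒜 := by rw [mv_of_moved ⟨hjA, hiA⟩]; exact hmv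
  unfold comp meas
  rw [sum_union, sum_image]
  · have key : ∑ A ∈ 𝒜.filter (fun A => mv i j A ∉ 𝒜), ∑ x ∈ mv i j A, x <
        ∑ A ∈ 𝒜.filter (fun A => mv i j A ∉ 𝒜), ∑ x ∈ A, x := by
      apply sum_lt_sum
      · intro B hB
        by_cases hc : j ∈ B ∧ i ∉ B
        · exact (sum_mv_lt hij hc).le
        · rw [mv_of_not hc]
      · exact ⟨A, mem_filter.2 ⟨hA, hmv'⟩, sum_mv_lt hij ⟨hjA, hiA⟩⟩
    have h2 := sum_filter_add_sum_filter_not 𝒜 (fun A => mv i j A ∈ 𝒜) (fun A => ∑ x ∈ A, x)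
    omega
  · intro A hA B hB h
    have hAm : j ∈ A ∧ i ∉ A := by
      have := mem_filter.1 hA; by_contra hc; rw [mv_of_not hc] at this; exact this.2 this.1
    have hBm : j ∈ B ∧ i ∉ B := by
      have := mem_filter.1 hB; by_contra hc; rw [mv_of_not hc] at this; exact this.2 this.1
    exact mv_inj_on_moved hij.ne hAm hBm h
  · rw [disjoint_right]
    intro A hA hA2
    rcases mem_image.1 hA with ⟨B, hB, hBA⟩
    exact (mem_filter.1 hB).2 (hBA ▸ (mem_filter.1 hA2).1)






lemma cross_symm (h : Cross 𝒜 ℬ) : Cross ℬ 𝒜 := fun B hB A hA => by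
  rw [inter_comm]; exact h A hA B hB

private lemma cross_mixed (h : Cross 𝒜 ℬ) (hA' : A ∈ 𝒜) (hfix : mv i j A ∈ 𝒜)
    (hB : B ∈ ℬ) (hBm : j ∈ B ∧ i ∉ B) : (A ∩ mv i j B).Nonempty := by
  by_contra hne
  have hempty : A ∩ mv i j B = ∅ := not_nonempty_iff_eq_empty.1 hne
  rw [mv_of_moved hBm] at hempty
  have hnotmem : ∀ x, x ∈ A → x ∈ insert i (B.erase j) → False := by
    intro x hx1 hx2
    have : x ∈ A ∩ insert i (B.erase j) := mem_inter.2 ⟨hx1, hx2⟩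
    rw [hempty] at this; exact notMem_empty _ this
  have hiA : i ∉ A := fun hi => hnotmem i hi (mem_insert_self _ _)
  have hjA : j ∈ A := by
    rcases h A hA' B hB with ⟨x, hx⟩
    rcases mem_inter.1 hx with ⟨hx1, hx2⟩
    by_cases hxj : x = j
    · exact hxj ▸ hx1
    · exact absurd (hnotmem x hx1 (mem_insert_of_mem (mem_erase.2 ⟨hxj, hx2⟩))) id
  rw [mv_of_moved ⟨hjA, hiA⟩] at hfix
  rcases h _ hfix B hB with ⟨y, hy⟩
  rcases mem_inter.1 hy with ⟨hy1, hy2⟩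
  rcases mem_insert.1 hy1 with rfl | hy1'
  · exact hBm.2 hy2
  · rcases mem_erase.1 hy1' with ⟨hyj, hyA⟩
    exact hnotmem y hyA (mem_insert_of_mem (mem_erase.2 ⟨hyj, hy2⟩))

lemma comp_cross (h : Cross 𝒜 ℬ) : Cross (comp i j 𝒜) (comp i j ℬ) := by
  intro A' hA' B' hB'
  rcases mem_comp_cases hA' with ⟨hA1, hA2⟩ | ⟨_, A, hA, hAm, hAe⟩ <;>
    rcases mem_comp_cases hB' with ⟨hB1, hB2⟩ | ⟨_, B, hB, hBm, hBe⟩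
  · exact h A' hA1 B' hB1
  · rw [← hBe]; exact cross_mixed h hA1 hA2 hB hBm
  · rw [← hAe, inter_comm]; exact cross_mixed (cross_symm h) hB1 hB2 hA hAm
  · rw [← hAe, ← hBe, mv_of_moved hAm, mv_of_moved hBm]
    exact ⟨i, mem_inter.2 ⟨mem_insert_self _ _, mem_insert_self _ _⟩⟩

lemma cover_of_comp_trivial (hnt : ¬ ∃ x, ∀ A ∈ 𝒜, x ∈ A) {z : ℕ}
    (hz : ∀ A ∈ comp i j 𝒜, z ∈ A) : ∀ A ∈ 𝒜, i ∈ A ∨ j ∈ A := by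
  by_contra hc
  push_neg at hc
  obtain ⟨A₀, hA₀, hi₀, hj₀⟩ := hc
  have hA₀fix : mv i j A₀ = A₀ := mv_of_not (fun hm => hj₀ hm.1)
  have hA₀c : A₀ ∈ comp i j 𝒜 := mem_comp_of_mem_of_fix hA₀ (by rw [hA₀fix]; exact hA₀)
  have hzA₀ := hz A₀ hA₀c
  have hzi : z ≠ i := fun h => hi₀ (h ▸ hzA₀)
  have hzj : z ≠ j := fun h => hj₀ (h ▸ hzA₀)
  apply hnt
  refine ⟨z, fun A hA => ?_⟩
  by_cases hfix : mv i j A ∈ 𝒜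
  · exact hz A (mem_comp_of_mem_of_fix hA hfix)
  · have hmem := hz _ (mem_comp_of_mem_of_not hA hfix)
    by_cases hm : j ∈ A ∧ i ∉ A
    · rw [mv_of_moved hm] at hmem
      rcases mem_insert.1 hmem with rfl | hmem
      · exact absurd rfl hzi
      · exact mem_of_mem_erase hmem
    · rw [mv_of_not hm] at hmem; exact hmem

/-- closure of shifted families under simultaneous downward moves -/
lemma shifted_image_mem (hS : Shifted 𝒜) :
    ∀ A ∈ 𝒜, ∀ ψ : ℕ → ℕ, Set.InjOn ψ ↑A → (∀ x ∈ A, ψ x ≤ x) → A.image ψ ∈ 𝒜 := by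
  suffices H : ∀ k A, A ∈ 𝒜 → ∀ ψ : ℕ → ℕ, (∑ x ∈ A, (x - ψ x)) = k →
      Set.InjOn ψ ↑A → (∀ x ∈ A, ψ x ≤ x) → A.image ψ ∈ 𝒜 by
    intro A hA ψ h1 h2; exact H _ A hA ψ rfl h1 h2
  intro k
  induction k using Nat.strong_induction_on with
  | _ k IH =>
    intro A hA ψ hk hinj hle
    by_cases hfix : ∀ x ∈ A, ψ x = x
    · have : A.image ψ = A := by
        rw [Finset.image_congr (g := id) (fun x hx => hfix x hx), image_id]
      rwa [this]
    · push_neg at hfix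
      have hT : (A.filter (fun x => ψ x ≠ x)).Nonempty := by
        obtain ⟨x, hx1, hx2⟩ := hfix; exact ⟨x, mem_filter.2 ⟨hx1, hx2⟩⟩
      have hSne : ((A.filter (fun x => ψ x ≠ x)).image ψ).Nonempty := hT.image ψ
      set s := ((A.filter (fun x => ψ x ≠ x)).image ψ).min' hSne with hs
      obtain ⟨x₀, hx₀T, hx₀s⟩ := mem_image.1 (min'_mem _ hSne)
      rcases mem_filter.1 hx₀T with ⟨hx₀A, hx₀ne⟩
      have hx₀lt : ψ x₀ < x₀ := lt_of_le_of_ne (hle _ hx₀A) hx₀ne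
      have hψx₀A : ψ x₀ ∉ A := by
        intro hyA
        by_cases hyfix : ψ (ψ x₀) = ψ x₀
        · exact hx₀ne (hinj hyA hx₀A hyfix)
        · have h1 : ψ (ψ x₀) ∈ (A.filter (fun x => ψ x ≠ x)).image ψ :=
            mem_image_of_mem _ (mem_filter.2 ⟨hyA, hyfix⟩)
          have h2 : s ≤ ψ (ψ x₀) := min'_le _ _ h1
          have h3 : ψ (ψ x₀) < ψ x₀ := lt_of_le_of_ne (hle _ hyA) hyfix
          omega
      have hA₂ : insert (ψ x₀) (A.erase x₀) ∈ 𝒜 :=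
        hS A hA x₀ hx₀A (ψ x₀) hx₀lt hψx₀A
      set ψ₂ : ℕ → ℕ := fun x => if x = ψ x₀ then ψ x₀ else ψ x with hψ₂
      have hmemne : ∀ x ∈ A.erase x₀, x ≠ ψ x₀ := by
        intro x hx h; exact hψx₀A (h ▸ mem_of_mem_erase hx)
      have hψ₂eq : ∀ x ∈ A.erase x₀, ψ₂ x = ψ x := by
        intro x hx; simp only [hψ₂, if_neg (hmemne x hx)]
      -- measure decreases
      have hsum : (∑ x ∈ insert (ψ x₀) (A.erase x₀), (x - ψ₂ x)) < k := by
        rw [sum_insert (fun h => hmemne _ h rfl)]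
        have e1 : ψ x₀ - ψ₂ (ψ x₀) = 0 := by simp [hψ₂]
        have e2 : ∑ x ∈ A.erase x₀, (x - ψ₂ x) = ∑ x ∈ A.erase x₀, (x - ψ x) :=
          sum_congr rfl (fun x hx => by rw [hψ₂eq x hx])
        have e3 : (x₀ - ψ x₀) + ∑ x ∈ A.erase x₀, (x - ψ x) = ∑ x ∈ A, (x - ψ x) :=
          Finset.add_sum_erase _ (fun x => x - ψ x) hx₀A
        omega
      have hinj₂ : Set.InjOn ψ₂ ↑(insert (ψ x₀) (A.erase x₀)) := by
        intro a ha b hb heq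
        simp only [coe_insert, Set.mem_insert_iff, mem_coe] at ha hb
        rcases ha with rfl | ha <;> rcases hb with rfl | hb
        · rfl
        · rw [hψ₂eq b hb] at heq
          simp only [hψ₂, if_pos rfl] at heq
          exact absurd (hinj (mem_of_mem_erase hb) hx₀A heq.symm)
            (fun h => (mem_erase.1 hb).1 h)
        · rw [hψ₂eq a ha] at heq
          simp only [hψ₂, if_pos rfl] at heq
          exact absurd (hinj (mem_of_mem_erase ha) hx₀A heq)
            (fun h => (mem_erase.1 ha).1 h)
        · rw [hψ₂eq a ha, hψ₂eq b hb] at heq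
          exact hinj (mem_of_mem_erase ha) (mem_of_mem_erase hb) heq
      have hle₂ : ∀ x ∈ insert (ψ x₀) (A.erase x₀), ψ₂ x ≤ x := by
        intro x hx
        rcases mem_insert.1 hx with rfl | hx
        · simp [hψ₂]
        · rw [hψ₂eq x hx]; exact hle x (mem_of_mem_erase hx)
      have himg : (insert (ψ x₀) (A.erase x₀)).image ψ₂ = A.image ψ := by
        ext z
        simp only [mem_image]
        constructor
        · rintro ⟨x, hx, rfl⟩
          rcases mem_insert.1 hx with rfl | hx
          · exact ⟨x₀, hx₀A, by simp [hψ₂]⟩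
          · exact ⟨x, mem_of_mem_erase hx, (hψ₂eq x hx).symm⟩
        · rintro ⟨x, hx, rfl⟩
          by_cases hxx₀ : x = x₀
          · subst hxx₀
            exact ⟨ψ x, mem_insert_self _ _, by simp [hψ₂]⟩
          · have hx' : x ∈ A.erase x₀ := mem_erase.2 ⟨hxx₀, hx⟩
            exact ⟨x, mem_insert_of_mem hx', hψ₂eq x hx'⟩
      have := IH _ hsum _ hA₂ ψ₂ rfl hinj₂ hle₂
      rwa [himg] at this

lemma shifted_range_mem (hS : Shifted 𝒜) (hA : A ∈ 𝒜) : range A.card ∈ 𝒜 := by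
  set ψ : ℕ → ℕ := fun x => (A.filter (· < x)).card with hψ
  have hmono : ∀ x ∈ A, ∀ y ∈ A, x < y → ψ x < ψ y := by
    intro x hx y hy hxy
    apply card_lt_card
    constructor
    · intro z hz
      rcases mem_filter.1 hz with ⟨hz1, hz2⟩
      exact mem_filter.2 ⟨hz1, lt_trans hz2 hxy⟩
    · intro hsub
      have : x ∈ A.filter (· < x) := hsub (mem_filter.2 ⟨hx, hxy⟩)
      exact lt_irrefl x (mem_filter.1 this).2
  have hinj : Set.InjOn ψ ↑A := by
    intro a ha b hb heq
    rcases lt_trichotomy a b with h | h | h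
    · exact absurd heq (hmono a ha b hb h).ne
    · exact h
    · exact absurd heq.symm (hmono b hb a ha h).ne
  have hle : ∀ x ∈ A, ψ x ≤ x := by
    intro x _
    calc (A.filter (· < x)).card ≤ (range x).card :=
          card_le_card (fun z hz => mem_range.2 (mem_filter.1 hz).2)
    _ = x := card_range x
  have hlt : ∀ x ∈ A, ψ x < A.card := by
    intro x hx
    apply card_lt_card
    constructor
    · exact filter_subset _ _
    · intro hsub
      exact lt_irrefl x (mem_filter.1 (hsub hx)).2
  have himg : A.image ψ = range A.card := by
    apply eq_of_subset_of_card_le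
    · intro z hz
      obtain ⟨x, hx, rfl⟩ := mem_image.1 hz
      exact mem_range.2 (hlt x hx)
    · rw [card_range, card_image_of_injOn hinj]
  have := shifted_image_mem hS A hA ψ hinj hle
  rwa [himg] at this

lemma shifted_Ico_mem (hS : Shifted 𝒜) (hA : A ∈ 𝒜) (h0 : 0 ∉ A) :
    Ico 1 (A.card + 1) ∈ 𝒜 := by
  set ψ : ℕ → ℕ := fun x => (A.filter (· < x)).card + 1 with hψ
  have hmono : ∀ x ∈ A, ∀ y ∈ A, x < y → ψ x < ψ y := by
    intro x hx y hy hxy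
    have : (A.filter (· < x)).card < (A.filter (· < y)).card := by
      apply card_lt_card
      constructor
      · intro z hz
        rcases mem_filter.1 hz with ⟨hz1, hz2⟩
        exact mem_filter.2 ⟨hz1, lt_trans hz2 hxy⟩
      · intro hsub
        have : x ∈ A.filter (· < x) := hsub (mem_filter.2 ⟨hx, hxy⟩)
        exact lt_irrefl x (mem_filter.1 this).2
    simpa [hψ] using Nat.succ_lt_succ this
  have hinj : Set.InjOn ψ ↑A := by
    intro a ha b hb heq
    rcases lt_trichotomy a b with h | h | h
    · exact absurd heq (hmono a ha b hb h).ne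
    · exact h
    · exact absurd heq.symm (hmono b hb a ha h).ne
  have hle : ∀ x ∈ A, ψ x ≤ x := by
    intro x hx
    have h1 : A.filter (· < x) ⊆ Ico 1 x := by
      intro z hz
      rcases mem_filter.1 hz with ⟨hz1, hz2⟩
      have : z ≠ 0 := fun h => h0 (h ▸ hz1)
      exact mem_Ico.2 ⟨by omega, hz2⟩
    have h2 := card_le_card h1
    rw [Nat.card_Ico] at h2
    have hx0 : x ≠ 0 := fun h => h0 (h ▸ hx)
    simp only [hψ]
    omega
  have hlt : ∀ x ∈ A, ψ x < A.card + 1 := by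
    intro x hx
    have : (A.filter (· < x)).card < A.card := by
      apply card_lt_card
      exact ⟨filter_subset _ _, fun hsub => lt_irrefl x (mem_filter.1 (hsub hx)).2⟩
    simp only [hψ]
    omega
  have himg : A.image ψ = Ico 1 (A.card + 1) := by
    apply eq_of_subset_of_card_le
    · intro z hz
      obtain ⟨x, hx, rfl⟩ := mem_image.1 hz
      exact mem_Ico.2 ⟨by simp [hψ], hlt x hx⟩
    · rw [Nat.card_Ico, card_image_of_injOn hinj]
      omega
  have := shifted_image_mem hS A hA ψ hinj hle
  rwa [himg] at this







/-- the set of `s`-subsets of `range m` disjoint from some member of `𝒜` -/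
def witU (s m : ℕ) (𝒜 : Finset (Finset ℕ)) : Finset (Finset ℕ) :=
  (powersetCard s (range m)).filter (fun X => ∃ A ∈ 𝒜, X ∩ A = ∅)

lemma mem_witU {s : ℕ} {X : Finset ℕ} :
    X ∈ witU s m 𝒜 ↔ (X ⊆ range m ∧ X.card = s) ∧ ∃ A ∈ 𝒜, X ∩ A = ∅ := by
  rw [witU, mem_filter, mem_powersetCard]

lemma shifted_filter_top (hS : Shifted 𝒜) (hB : Bdd m 𝒜) :
    Shifted (𝒜.filter (fun A => ¬ (m-1) ∈ A)) := by
  intro A hA j hj i hij hiA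
  rcases mem_filter.1 hA with ⟨hA𝒜, htA⟩
  have hjm : j < m - 1 := by
    have h1 : j < m := mem_range.1 (hB A hA𝒜 hj)
    have h2 : j ≠ m - 1 := fun h => htA (h ▸ hj)
    omega
  refine mem_filter.2 ⟨hS A hA𝒜 j hj i hij hiA, ?_⟩
  intro hmem
  rcases mem_insert.1 hmem with h | h
  · omega
  · exact htA (mem_of_mem_erase h)

lemma shifted_slice (hS : Shifted 𝒜) (hB : Bdd m 𝒜) :
    Shifted ((𝒜.filter (fun A => (m-1) ∈ A)).image (fun A => A.erase (m-1))) := by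
  intro D hD j hj i hij hiD
  obtain ⟨A, hA, rfl⟩ := mem_image.1 hD
  rcases mem_filter.1 hA with ⟨hA𝒜, htA⟩
  have hjA : j ∈ A := mem_of_mem_erase hj
  have hjt : j ≠ m - 1 := (mem_erase.1 hj).1
  have hjm : j < m - 1 := by
    have := mem_range.1 (hB A hA𝒜 hjA); omega
  have hit : i ≠ m - 1 := by omega
  have hiA : i ∉ A := fun h => hiD (mem_erase.2 ⟨hit, h⟩)
  have hA' : insert i (A.erase j) ∈ 𝒜 := hS A hA𝒜 j hjA i hij hiA
  refine mem_image.2 ⟨insert i (A.erase j), mem_filter.2 ⟨hA', ?_⟩, ?_⟩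
  · exact mem_insert_of_mem (mem_erase.2 ⟨fun h => hjt h.symm, htA⟩)
  · rw [erase_insert_of_ne hit]
    congr 1
    ext x
    simp only [mem_erase]
    tauto

lemma bdd_slice (hB : Bdd m 𝒜) :
    Bdd (m-1) ((𝒜.filter (fun A => (m-1) ∈ A)).image (fun A => A.erase (m-1))) := by
  intro D hD
  obtain ⟨A, hA, rfl⟩ := mem_image.1 hD
  intro x hx
  have hxm := mem_range.1 (hB A (mem_filter.1 hA).1 (mem_of_mem_erase hx))
  have hxt := (mem_erase.1 hx).1
  exact mem_range.2 (by omega)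

lemma card_slice : ((𝒜.filter (fun A => (m-1) ∈ A)).image (fun A => A.erase (m-1))).card
    = (𝒜.filter (fun A => (m-1) ∈ A)).card := by
  apply card_image_of_injOn
  intro A hA B hB h
  simp only [coe_filter, Set.mem_setOf_eq] at hA hB
  have h' : A.erase (m-1) = B.erase (m-1) := h
  rw [← insert_erase hA.2, ← insert_erase hB.2, h']

theorem lemU : ∀ m, ∀ u, ∀ 𝒜, Shifted 𝒜 → Sized u 𝒜 → Bdd m 𝒜 → 𝒜.Nonempty →
    2*u ≤ m → 𝒜.card ≤ (witU u m 𝒜).card := by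
  intro m
  induction m using Nat.strong_induction_on with
  | _ m IH =>
    intro u 𝒜 hS hSz hB hne h2u
    obtain ⟨A₀, hA₀⟩ := hne
    rcases Nat.eq_zero_or_pos u with rfl | hu
    · -- u = 0 : 𝒜 = {∅}
      have h1 : 𝒜 ⊆ {∅} := by
        intro A hA; rw [mem_singleton, ← card_eq_zero]; exact hSz A hA
      have h2 : (∅ : Finset ℕ) ∈ witU 0 m 𝒜 := by
        rw [mem_witU]
        exact ⟨⟨empty_subset _, card_empty⟩, A₀, hA₀, by simp⟩
      calc 𝒜.card ≤ 1 := by simpa using card_le_card h1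
      _ ≤ _ := card_pos.2 ⟨∅, h2⟩
    rcases eq_or_lt_of_le h2u with hm | hm
    · -- base m = 2u : complements
      apply card_le_card_of_injOn (fun A => range m \ A)
      · intro A hA
        rw [mem_coe, mem_witU]
        refine ⟨⟨sdiff_subset, ?_⟩, A, hA, sdiff_inter_self _ _⟩
        rw [card_sdiff_of_subset (hB A hA), card_range, hSz A hA]
        omega
      · intro A hA' B hB' h
        have h2 : range m \ A = range m \ B := h
        have hrec : ∀ C ∈ 𝒜, range m ∩ C = C := fun C hC => inter_eq_right.2 (hB C hC)
        have h3 : range m \ (range m \ A) = range m \ (range m \ B) := by rw [h2]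
        rwa [sdiff_sdiff_self_left, sdiff_sdiff_self_left, hrec A hA', hrec B hB'] at h3
    · -- step m > 2u
      let t := m - 1
      have ht : t = m - 1 := rfl
      let 𝒜₀ := 𝒜.filter (fun A => ¬ t ∈ A)
      let 𝒜₁ := 𝒜.filter (fun A => t ∈ A)
      let 𝒟 := 𝒜₁.image (fun A => A.erase t)
      have hsplit : 𝒜₁.card + 𝒜₀.card = 𝒜.card :=
        card_filter_add_card_filter_not _
      have hrangeu : range u ∈ 𝒜₀ := by
        have h1 : range A₀.card ∈ 𝒜 := shifted_range_mem hS hA₀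
        rw [hSz A₀ hA₀] at h1
        refine mem_filter.2 ⟨h1, ?_⟩
        rw [mem_range]; omega
      have hS₀ : Shifted 𝒜₀ := shifted_filter_top hS hB
      have hB₀ : Bdd (m-1) 𝒜₀ := by
        intro A hA x hx
        rcases mem_filter.1 hA with ⟨hA𝒜, htA⟩
        have h1 := mem_range.1 (hB A hA𝒜 hx)
        have h2 : x ≠ m - 1 := by
          intro hxe
          exact htA (show t ∈ A by rw [ht, ← hxe]; exact hx)
        exact mem_range.2 (by omega)
      have IH₀ : 𝒜₀.card ≤ (witU u (m-1) 𝒜₀).card :=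
        IH (m-1) (by omega) u 𝒜₀ hS₀ (fun A hA => hSz A (mem_filter.1 hA).1) hB₀
          ⟨range u, hrangeu⟩ (by omega)
      have hrsub : range (m-1) ⊆ range m := by
        intro z hz; rw [mem_range] at *; omega
      have hsub₀ : witU u (m-1) 𝒜₀ ⊆ (witU u m 𝒜).filter (fun X => ¬ t ∈ X) := by
        intro X hX
        rcases mem_witU.1 hX with ⟨⟨hX1, hX2⟩, A, hA, hXA⟩
        refine mem_filter.2 ⟨mem_witU.2 ⟨⟨hX1.trans hrsub, hX2⟩, A, (mem_filter.1 hA).1, hXA⟩, ?_⟩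
        intro hmem
        have := mem_range.1 (hX1 hmem); omega
      have hwit : ((witU u m 𝒜).filter (fun X => t ∈ X)).card
          + ((witU u m 𝒜).filter (fun X => ¬ t ∈ X)).card = (witU u m 𝒜).card :=
        card_filter_add_card_filter_not _
      by_cases h𝒜₁e : 𝒜₁ = ∅
      · have h0 : 𝒜.card = 𝒜₀.card := by rw [← hsplit, h𝒜₁e]; simp
        rw [h0]
        calc 𝒜₀.card ≤ (witU u (m-1) 𝒜₀).card := IH₀
        _ ≤ ((witU u m 𝒜).filter (fun X => ¬ t ∈ X)).card := card_le_card hsub₀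
        _ ≤ (witU u m 𝒜).card := by omega
      · obtain ⟨A₁, hA₁⟩ := nonempty_of_ne_empty h𝒜₁e
        have h𝒟ne : 𝒟.Nonempty := ⟨A₁.erase t, mem_image_of_mem _ hA₁⟩
        have h𝒟card : 𝒟.card = 𝒜₁.card := card_slice
        have h𝒟S : Shifted 𝒟 := shifted_slice hS hB
        have h𝒟sz : Sized (u-1) 𝒟 := by
          intro D hD
          obtain ⟨A, hA, rfl⟩ := mem_image.1 hD
          rcases mem_filter.1 hA with ⟨hA𝒜, htA⟩
          rw [card_erase_of_mem htA, hSz A hA𝒜]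
        have h𝒟B : Bdd (m-1) 𝒟 := bdd_slice hB
        have IH₁ : 𝒟.card ≤ (witU (u-1) (m-1) 𝒟).card :=
          IH (m-1) (by omega) (u-1) 𝒟 h𝒟S h𝒟sz h𝒟B h𝒟ne (by omega)
        have hlift : (witU (u-1) (m-1) 𝒟).card
            ≤ ((witU u m 𝒜).filter (fun X => t ∈ X)).card := by
          apply card_le_card_of_injOn (fun Y => insert t Y)
          · intro Y hY
            rcases mem_witU.1 hY with ⟨⟨hY1, hY2⟩, D, hD, hYD⟩
            have htY : t ∉ Y := fun h => by have := mem_range.1 (hY1 h); omega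
            obtain ⟨A, hA, rfl⟩ := mem_image.1 hD
            rcases mem_filter.1 hA with ⟨hA𝒜, htA⟩
            have hcardD : (A.erase t).card = u - 1 := by
              rw [card_erase_of_mem htA, hSz A hA𝒜]
            have hWne : ¬ (range (m-1) ⊆ (A.erase t ∪ Y)) := by
              intro hsub
              have h1 := card_le_card hsub
              have h2 := card_union_le (A.erase t) Y
              rw [card_range] at h1
              omega
            obtain ⟨i, hiR, hiU⟩ := not_subset.1 hWne
            have hiD : i ∉ A.erase t := fun h => hiU (mem_union_left _ h)
            have hiY : i ∉ Y := fun h => hiU (mem_union_right _ h)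
            have hit : i < t := by have := mem_range.1 hiR; omega
            have hiA : i ∉ A := fun h => hiD (mem_erase.2 ⟨by omega, h⟩)
            have hG : insert i (A.erase t) ∈ 𝒜 := hS A hA𝒜 t htA i hit hiA
            refine mem_filter.2 ⟨mem_witU.2 ⟨⟨?_, ?_⟩, insert i (A.erase t), hG, ?_⟩,
              mem_insert_self _ _⟩
            · intro x hx
              rcases mem_insert.1 hx with rfl | hx
              · exact mem_range.2 (by omega)
              · exact hrsub (hY1 hx)
            · rw [card_insert_of_notMem htY, hY2]; omega
            · rw [eq_empty_iff_forall_notMem]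
              intro x hx
              rcases mem_inter.1 hx with ⟨hx1, hx2⟩
              rcases mem_insert.1 hx1 with rfl | hxY
              · rcases mem_insert.1 hx2 with h | h
                · omega
                · exact (mem_erase.1 h).1 rfl
              · rcases mem_insert.1 hx2 with rfl | h
                · exact hiY hxY
                · have : x ∈ Y ∩ A.erase t := mem_inter.2 ⟨hxY, h⟩
                  rw [hYD] at this
                  exact notMem_empty _ this
          · intro Y hY Y' hY' h
            have htY : t ∉ Y := fun hmem => by
              have := mem_range.1 ((mem_witU.1 hY).1.1 hmem); omega
            have htY' : t ∉ Y' := fun hmem => by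
              have := mem_range.1 ((mem_witU.1 hY').1.1 hmem); omega
            have := congrArg (fun S => Finset.erase S t) h
            simpa [erase_insert htY, erase_insert htY'] using this
        calc 𝒜.card = 𝒜₁.card + 𝒜₀.card := hsplit.symm
        _ = 𝒟.card + 𝒜₀.card := by rw [h𝒟card]
        _ ≤ ((witU u m 𝒜).filter (fun X => t ∈ X)).card
            + ((witU u m 𝒜).filter (fun X => ¬ t ∈ X)).card := by
          have h1 := IH₁.trans hlift
          have h2 := IH₀.trans (card_le_card hsub₀)
          omega
        _ = (witU u m 𝒜).card := hwit







/-- witnesses meeting the block `range q` -/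
def witT (s q m : ℕ) (𝒜 : Finset (Finset ℕ)) : Finset (Finset ℕ) :=
  (powersetCard s (range m)).filter
    (fun X => (X ∩ range q).Nonempty ∧ ∃ A ∈ 𝒜, X ∩ A = ∅)

lemma mem_witT {s : ℕ} {X : Finset ℕ} :
    X ∈ witT s q m 𝒜 ↔ (X ⊆ range m ∧ X.card = s) ∧
      (X ∩ range q).Nonempty ∧ ∃ A ∈ 𝒜, X ∩ A = ∅ := by
  rw [witT, mem_filter, mem_powersetCard]

theorem lemT1 (q : ℕ) : ∀ m, ∀ u, ∀ 𝒜, Shifted 𝒜 → Sized u 𝒜 → Bdd m 𝒜 → 𝒜.Nonempty →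
    (∀ A ∈ 𝒜, (A ∩ range q).Nonempty) → u ≤ q → (u = q → 2*q ≤ m) → (u < q → q + u ≤ m + 1) →
    𝒜.card ≤ (witT u q m 𝒜).card + (if u = q then 1 else 0) := by
  intro m
  induction m using Nat.strong_induction_on with
  | _ m IH =>
    intro u 𝒜 hS hSz hB hne hblk huq hq1 hq2
    obtain ⟨A₀, hA₀⟩ := hne
    have hu1 : 1 ≤ u := by
      obtain ⟨x, hx⟩ := hblk A₀ hA₀
      have hne' : A₀.Nonempty := ⟨x, (mem_inter.1 hx).1⟩
      have hc := card_pos.2 hne'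
      rw [hSz A₀ hA₀] at hc
      omega
    have hq0 : 1 ≤ q := by
      obtain ⟨x, hx⟩ := hblk A₀ hA₀
      have := mem_range.1 (mem_inter.1 hx).2
      omega
    -- base case 1 : u = q, m = 2q
    by_cases hb1 : u = q ∧ m = 2*q
    · obtain ⟨rfl, rfl⟩ := hb1
      rw [if_pos rfl]
      have hinj : (𝒜.erase (range u)).card ≤ (witT u u (2*u) 𝒜).card := by
        apply card_le_card_of_injOn (fun A => range (2*u) \ A)
        · intro A hA'
          have hA𝒜 : A ∈ 𝒜 := mem_of_mem_erase hA'
          rw [mem_coe, mem_witT]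
          refine ⟨⟨sdiff_subset, ?_⟩, ?_, A, hA𝒜, sdiff_inter_self _ _⟩
          · rw [card_sdiff_of_subset (hB A hA𝒜), card_range, hSz A hA𝒜]; omega
          · by_contra hcon
            rw [not_nonempty_iff_eq_empty] at hcon
            have hsub : range u ⊆ A := by
              intro x hx
              by_contra hxA
              have hx2 : x ∈ range (2*u) := by
                rw [mem_range] at *; omega
              have : x ∈ (range (2*u) \ A) ∩ range u :=
                mem_inter.2 ⟨mem_sdiff.2 ⟨hx2, hxA⟩, hx⟩
              rw [hcon] at this
              exact notMem_empty _ this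
            have : range u = A := eq_of_subset_of_card_le hsub
              (by rw [card_range, hSz A hA𝒜])
            exact (mem_erase.1 hA').1 this.symm
        · intro A hA' B hB' h
          have h2 : range (2*u) \ A = range (2*u) \ B := h
          have hA𝒜 : A ∈ 𝒜 := mem_of_mem_erase hA'
          have hB𝒜 : B ∈ 𝒜 := mem_of_mem_erase hB'
          have h3 : range (2*u) \ (range (2*u) \ A) = range (2*u) \ (range (2*u) \ B) := by
            rw [h2]
          rwa [sdiff_sdiff_self_left, sdiff_sdiff_self_left,
            inter_eq_right.2 (hB A hA𝒜), inter_eq_right.2 (hB B hB𝒜)] at h3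
      by_cases hmem : range u ∈ 𝒜
      · rw [← card_erase_add_one hmem]; omega
      · rw [erase_eq_of_notMem hmem] at hinj; omega
    -- base case 2 : u < q, m + 1 = q + u
    by_cases hb2 : u < q ∧ m + 1 = q + u
    · obtain ⟨hlt, hmeq⟩ := hb2
      rw [if_neg hlt.ne]
      have hsub : witU u m 𝒜 ⊆ witT u q m 𝒜 := by
        intro X hX
        rcases mem_witU.1 hX with ⟨⟨hX1, hX2⟩, hwit⟩
        rw [mem_witT]
        refine ⟨⟨hX1, hX2⟩, ?_, hwit⟩
        by_contra hcon
        rw [not_nonempty_iff_eq_empty] at hcon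
        have hXsub : X ⊆ range m \ range q := by
          intro x hx
          refine mem_sdiff.2 ⟨hX1 hx, fun hq => ?_⟩
          have : x ∈ X ∩ range q := mem_inter.2 ⟨hx, hq⟩
          rw [hcon] at this
          exact notMem_empty _ this
        have h1 := card_le_card hXsub
        rw [card_sdiff_of_subset (by intro z hz; rw [mem_range] at *; omega), card_range,
          card_range, hX2] at h1
        omega
      have := lemU m u 𝒜 hS hSz hB ⟨A₀, hA₀⟩ (by omega)
      have := card_le_card hsub
      omega
    -- step
    have hfacts : 2*u < m ∧ q ≤ m - 1 ∧ (u = q → 2*q ≤ m-1) ∧ (u < q → q + u ≤ m) := by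
      rcases eq_or_lt_of_le huq with rfl | hlt
      · have h1 := hq1 rfl
        have hne2 : m ≠ 2*u := fun h => hb1 ⟨rfl, h⟩
        exact ⟨by omega, by omega, fun _ => by omega, fun h => absurd h (lt_irrefl u)⟩
      · have h1 := hq2 hlt
        have hne2 : m + 1 ≠ q + u := fun h => hb2 ⟨hlt, h⟩
        exact ⟨by omega, by omega, fun h => absurd h (by omega), fun _ => by omega⟩
    obtain ⟨h2um, hqm1, hrec1, hrec2⟩ := hfacts
    have hrsub : range (m-1) ⊆ range m := by
      intro z hz; rw [mem_range] at *; omega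
    have hrangeu : range u ∈ 𝒜.filter (fun A => ¬ (m-1) ∈ A) := by
      have h1 : range A₀.card ∈ 𝒜 := shifted_range_mem hS hA₀
      rw [hSz A₀ hA₀] at h1
      refine mem_filter.2 ⟨h1, ?_⟩
      rw [mem_range]; omega
    have hS₀ : Shifted (𝒜.filter (fun A => ¬ (m-1) ∈ A)) := shifted_filter_top hS hB
    have hB₀ : Bdd (m-1) (𝒜.filter (fun A => ¬ (m-1) ∈ A)) := by
      intro A hA x hx
      rcases mem_filter.1 hA with ⟨hA𝒜, htA⟩
      have h1 := mem_range.1 (hB A hA𝒜 hx)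
      have h2 : x ≠ m - 1 := fun hxe => htA (hxe ▸ hx)
      exact mem_range.2 (by omega)
    have IH₀ : (𝒜.filter (fun A => ¬ (m-1) ∈ A)).card
        ≤ (witT u q (m-1) (𝒜.filter (fun A => ¬ (m-1) ∈ A))).card
          + (if u = q then 1 else 0) :=
      IH (m-1) (by omega) u _ hS₀ (fun A hA => hSz A (mem_filter.1 hA).1) hB₀
        ⟨range u, hrangeu⟩ (fun A hA => hblk A (mem_filter.1 hA).1) huq
        (fun h => hrec1 h) (fun h => by have := hrec2 h; omega)
    have hsub₀ : witT u q (m-1) (𝒜.filter (fun A => ¬ (m-1) ∈ A))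
        ⊆ (witT u q m 𝒜).filter (fun X => ¬ (m-1) ∈ X) := by
      intro X hX
      rcases mem_witT.1 hX with ⟨⟨hX1, hX2⟩, hXb, A, hA, hXA⟩
      refine mem_filter.2 ⟨mem_witT.2 ⟨⟨hX1.trans hrsub, hX2⟩, hXb, A,
        (mem_filter.1 hA).1, hXA⟩, ?_⟩
      intro hmem
      have := mem_range.1 (hX1 hmem); omega
    have hwit : ((witT u q m 𝒜).filter (fun X => (m-1) ∈ X)).card
        + ((witT u q m 𝒜).filter (fun X => ¬ (m-1) ∈ X)).card = (witT u q m 𝒜).card :=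
      card_filter_add_card_filter_not _
    have hsplit : (𝒜.filter (fun A => (m-1) ∈ A)).card
        + (𝒜.filter (fun A => ¬ (m-1) ∈ A)).card = 𝒜.card :=
      card_filter_add_card_filter_not _
    by_cases h𝒜₁e : 𝒜.filter (fun A => (m-1) ∈ A) = ∅
    · have h0 : 𝒜.card = (𝒜.filter (fun A => ¬ (m-1) ∈ A)).card := by
        rw [← hsplit, h𝒜₁e]; simp
      have h2 := card_le_card hsub₀
      omega
    · obtain ⟨A₁, hA₁⟩ := nonempty_of_ne_empty h𝒜₁e
      have hu2 : 2 ≤ u := by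
        by_contra hcon
        have hu1' : u = 1 := by omega
        rcases mem_filter.1 hA₁ with ⟨hA₁𝒜, htA₁⟩
        have hcard : A₁.card = 1 := by rw [hSz A₁ hA₁𝒜, hu1']
        obtain ⟨a, ha⟩ := card_eq_one.1 hcard
        obtain ⟨x, hx⟩ := hblk A₁ hA₁𝒜
        rcases mem_inter.1 hx with ⟨hx1, hx2⟩
        rw [ha, mem_singleton] at hx1 htA₁
        have := mem_range.1 hx2
        omega
      have h𝒟ne : ((𝒜.filter (fun A => (m-1) ∈ A)).image (fun A => A.erase (m-1))).Nonempty :=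
        ⟨A₁.erase (m-1), mem_image_of_mem _ hA₁⟩
      have h𝒟card : ((𝒜.filter (fun A => (m-1) ∈ A)).image (fun A => A.erase (m-1))).card
          = (𝒜.filter (fun A => (m-1) ∈ A)).card := card_slice
      have h𝒟S : Shifted ((𝒜.filter (fun A => (m-1) ∈ A)).image (fun A => A.erase (m-1))) :=
        shifted_slice hS hB
      have h𝒟sz : Sized (u-1) ((𝒜.filter (fun A => (m-1) ∈ A)).image (fun A => A.erase (m-1))) := by
        intro D hD
        obtain ⟨A, hA, rfl⟩ := mem_image.1 hD
        rcases mem_filter.1 hA with ⟨hA𝒜, htA⟩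
        rw [card_erase_of_mem htA, hSz A hA𝒜]
      have h𝒟blk : ∀ D ∈ (𝒜.filter (fun A => (m-1) ∈ A)).image (fun A => A.erase (m-1)),
          (D ∩ range q).Nonempty := by
        intro D hD
        obtain ⟨A, hA, rfl⟩ := mem_image.1 hD
        obtain ⟨x, hx⟩ := hblk A (mem_filter.1 hA).1
        rcases mem_inter.1 hx with ⟨hx1, hx2⟩
        have hxq := mem_range.1 hx2
        refine ⟨x, mem_inter.2 ⟨mem_erase.2 ⟨by omega, hx1⟩, hx2⟩⟩
      have IH₁ : ((𝒜.filter (fun A => (m-1) ∈ A)).image (fun A => A.erase (m-1))).card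
          ≤ (witT (u-1) q (m-1)
              ((𝒜.filter (fun A => (m-1) ∈ A)).image (fun A => A.erase (m-1)))).card
            + (if u - 1 = q then 1 else 0) :=
        IH (m-1) (by omega) (u-1) _ h𝒟S h𝒟sz (bdd_slice hB) h𝒟ne h𝒟blk (by omega)
          (fun h => absurd h (by omega))
          (fun _ => by
            rcases eq_or_lt_of_le huq with rfl | h
            · have := hrec1 rfl; omega
            · have := hrec2 h; omega)
      rw [if_neg (by omega : ¬ u - 1 = q)] at IH₁
      have hlift : (witT (u-1) q (m-1)
            ((𝒜.filter (fun A => (m-1) ∈ A)).image (fun A => A.erase (m-1)))).card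
          ≤ ((witT u q m 𝒜).filter (fun X => (m-1) ∈ X)).card := by
        apply card_le_card_of_injOn (fun Y => insert (m-1) Y)
        · intro Y hY
          rcases mem_witT.1 hY with ⟨⟨hY1, hY2⟩, hYb, D, hD, hYD⟩
          have htY : (m-1) ∉ Y := fun h => by have := mem_range.1 (hY1 h); omega
          obtain ⟨A, hA, rfl⟩ := mem_image.1 hD
          rcases mem_filter.1 hA with ⟨hA𝒜, htA⟩
          have hcardD : (A.erase (m-1)).card = u - 1 := by
            rw [card_erase_of_mem htA, hSz A hA𝒜]
          have hWne : ¬ (range (m-1) ⊆ (A.erase (m-1) ∪ Y)) := by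
            intro hsub
            have h1 := card_le_card hsub
            have h2 := card_union_le (A.erase (m-1)) Y
            rw [card_range] at h1
            omega
          obtain ⟨i, hiR, hiU⟩ := not_subset.1 hWne
          have hiD : i ∉ A.erase (m-1) := fun h => hiU (mem_union_left _ h)
          have hiY : i ∉ Y := fun h => hiU (mem_union_right _ h)
          have hit : i < m - 1 := mem_range.1 hiR
          have hiA : i ∉ A := fun h => hiD (mem_erase.2 ⟨by omega, h⟩)
          have hG : insert i (A.erase (m-1)) ∈ 𝒜 := hS A hA𝒜 (m-1) htA i hit hiA
          refine mem_filter.2 ⟨mem_witT.2 ⟨⟨?_, ?_⟩, ?_, insert i (A.erase (m-1)), hG, ?_⟩,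
            mem_insert_self _ _⟩
          · intro x hx
            rcases mem_insert.1 hx with rfl | hx
            · exact mem_range.2 (by omega)
            · exact hrsub (hY1 hx)
          · rw [card_insert_of_notMem htY, hY2]; omega
          · obtain ⟨x, hx⟩ := hYb
            rcases mem_inter.1 hx with ⟨hx1, hx2⟩
            exact ⟨x, mem_inter.2 ⟨mem_insert_of_mem hx1, hx2⟩⟩
          · rw [eq_empty_iff_forall_notMem]
            intro x hx
            rcases mem_inter.1 hx with ⟨hx1, hx2⟩
            rcases mem_insert.1 hx1 with rfl | hxY
            · rcases mem_insert.1 hx2 with h | h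
              · omega
              · exact (mem_erase.1 h).1 rfl
            · rcases mem_insert.1 hx2 with rfl | h
              · exact hiY hxY
              · have : x ∈ Y ∩ A.erase (m-1) := mem_inter.2 ⟨hxY, h⟩
                rw [hYD] at this
                exact notMem_empty _ this
        · intro Y hY Y' hY' h
          have htY : (m-1) ∉ Y := fun hmem => by
            have := mem_range.1 ((mem_witT.1 hY).1.1 hmem); omega
          have htY' : (m-1) ∉ Y' := fun hmem => by
            have := mem_range.1 ((mem_witT.1 hY').1.1 hmem); omega
          have := congrArg (fun S => Finset.erase S (m-1)) h
          simpa [erase_insert htY, erase_insert htY'] using this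
      have h2 := card_le_card hsub₀
      omega







lemma pair_shift : ∀ N 𝒜 ℬ, meas 𝒜 + meas ℬ < N → Cross 𝒜 ℬ → Sized p 𝒜 → Sized p ℬ →
    Bdd m 𝒜 → Bdd m ℬ →
    ∃ 𝒜' ℬ', Shifted 𝒜' ∧ Shifted ℬ' ∧ Cross 𝒜' ℬ' ∧ Sized p 𝒜' ∧ Sized p ℬ' ∧
      Bdd m 𝒜' ∧ Bdd m ℬ' ∧ 𝒜'.card = 𝒜.card ∧ ℬ'.card = ℬ.card := by
  intro N
  induction N with
  | zero => intro 𝒜 ℬ h; omega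
  | succ N IH =>
    intro 𝒜 ℬ hN hC hs𝒜 hsℬ hb𝒜 hbℬ
    by_cases hS𝒜 : Shifted 𝒜
    · by_cases hSℬ : Shifted ℬ
      · exact ⟨𝒜, ℬ, hS𝒜, hSℬ, hC, hs𝒜, hsℬ, hb𝒜, hbℬ, rfl, rfl⟩
      · rw [Shifted] at hSℬ
        push_neg at hSℬ
        obtain ⟨B, hB, j, hjB, i, hij, hiB, hnm⟩ := hSℬ
        have him : i < m := lt_trans hij (mem_range.1 (hbℬ B hB hjB))
        obtain ⟨𝒜', ℬ', h⟩ := IH (comp i j 𝒜) (comp i j ℬ)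
          (by
            have h1 := meas_comp_le (𝒜 := 𝒜) hij
            have h2 := meas_comp_lt hij hB hjB hiB hnm
            omega)
          (comp_cross hC) (comp_sized hij.ne hs𝒜) (comp_sized hij.ne hsℬ)
          (comp_bdd him hb𝒜) (comp_bdd him hbℬ)
        exact ⟨𝒜', ℬ', h.1, h.2.1, h.2.2.1, h.2.2.2.1, h.2.2.2.2.1, h.2.2.2.2.2.1,
          h.2.2.2.2.2.2.1, h.2.2.2.2.2.2.2.1.trans (comp_card hij.ne),
          h.2.2.2.2.2.2.2.2.trans (comp_card hij.ne)⟩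
    · rw [Shifted] at hS𝒜
      push_neg at hS𝒜
      obtain ⟨A, hA, j, hjA, i, hij, hiA, hnm⟩ := hS𝒜
      have him : i < m := lt_trans hij (mem_range.1 (hb𝒜 A hA hjA))
      obtain ⟨𝒜', ℬ', h⟩ := IH (comp i j 𝒜) (comp i j ℬ)
        (by
          have h1 := meas_comp_le (𝒜 := ℬ) hij
          have h2 := meas_comp_lt hij hA hjA hiA hnm
          omega)
        (comp_cross hC) (comp_sized hij.ne hs𝒜) (comp_sized hij.ne hsℬ)
        (comp_bdd him hb𝒜) (comp_bdd him hbℬ)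
      exact ⟨𝒜', ℬ', h.1, h.2.1, h.2.2.1, h.2.2.2.1, h.2.2.2.2.1, h.2.2.2.2.2.1,
        h.2.2.2.2.2.2.1, h.2.2.2.2.2.2.2.1.trans (comp_card hij.ne),
        h.2.2.2.2.2.2.2.2.trans (comp_card hij.ne)⟩

lemma card_blockuniv (hq : q ≤ m) (p : ℕ) :
    ((powersetCard p (range m)).filter (fun X => (X ∩ range q).Nonempty)).card
      = m.choose p - (m - q).choose p := by
  have hneg : (powersetCard p (range m)).filter (fun X => ¬ (X ∩ range q).Nonempty)
      = powersetCard p (Ico q m) := by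
    ext X
    simp only [mem_filter, mem_powersetCard, not_nonempty_iff_eq_empty]
    constructor
    · rintro ⟨⟨hsub, hcard⟩, hempty⟩
      refine ⟨fun x hx => ?_, hcard⟩
      have hxm := mem_range.1 (hsub hx)
      have hxq : ¬ x < q := by
        intro hlt
        have : x ∈ X ∩ range q := mem_inter.2 ⟨hx, mem_range.2 hlt⟩
        rw [hempty] at this
        exact notMem_empty _ this
      exact mem_Ico.2 ⟨by omega, hxm⟩
    · rintro ⟨hsub, hcard⟩
      refine ⟨⟨fun x hx => ?_, hcard⟩, ?_⟩
      · exact mem_range.2 (mem_Ico.1 (hsub hx)).2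
      · rw [eq_empty_iff_forall_notMem]
        intro x hx
        rcases mem_inter.1 hx with ⟨hx1, hx2⟩
        have := (mem_Ico.1 (hsub hx1)).1
        have := mem_range.1 hx2
        omega
  have htot := card_filter_add_card_filter_not
    (s := powersetCard p (range m)) (fun X => (X ∩ range q).Nonempty)
  rw [hneg] at htot
  rw [card_powersetCard, card_powersetCard, Nat.card_Ico, card_range] at htot
  omega

theorem lemL (hp : 2*p ≤ m) (hC : Cross 𝒜 ℬ) (hs𝒜 : Sized p 𝒜) (hsℬ : Sized p ℬ)
    (hb𝒜 : Bdd m 𝒜) (hbℬ : Bdd m ℬ) (hne𝒜 : 𝒜.Nonempty) (hneℬ : ℬ.Nonempty) :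
    𝒜.card + ℬ.card ≤ m.choose p - (m-p).choose p + 1 := by
  obtain ⟨𝒜', ℬ', hS𝒜, hSℬ, hC', hs𝒜', hsℬ', hb𝒜', hbℬ', hc𝒜, hcℬ⟩ :=
    pair_shift (meas 𝒜 + meas ℬ + 1) 𝒜 ℬ (by omega) hC hs𝒜 hsℬ hb𝒜 hbℬ
  have hne𝒜' : 𝒜'.Nonempty := card_pos.1 (by rw [hc𝒜]; exact card_pos.2 hne𝒜)
  have hneℬ' : ℬ'.Nonempty := card_pos.1 (by rw [hcℬ]; exact card_pos.2 hneℬ)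
  have hp1 : 1 ≤ p := by
    obtain ⟨A, hA⟩ := hne𝒜'
    obtain ⟨B, hB⟩ := hneℬ'
    obtain ⟨x, hx⟩ := hC' A hA B hB
    have : A.Nonempty := ⟨x, (mem_inter.1 hx).1⟩
    have hcp := card_pos.2 this
    rw [hs𝒜' A hA] at hcp
    omega
  obtain ⟨A₁, hA₁⟩ := hne𝒜'
  obtain ⟨B₁, hB₁⟩ := hneℬ'
  have hr𝒜 : range p ∈ 𝒜' := by
    have := shifted_range_mem hS𝒜 hA₁
    rwa [hs𝒜' A₁ hA₁] at this
  have hrℬ : range p ∈ ℬ' := by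
    have := shifted_range_mem hSℬ hB₁
    rwa [hsℬ' B₁ hB₁] at this
  have hblkℬ : ∀ B ∈ ℬ', (B ∩ range p).Nonempty := by
    intro B hB
    obtain ⟨x, hx⟩ := hC' (range p) hr𝒜 B hB
    rcases mem_inter.1 hx with ⟨hx1, hx2⟩
    exact ⟨x, mem_inter.2 ⟨hx2, hx1⟩⟩
  have hT := lemT1 p m p ℬ' hSℬ hsℬ' hbℬ' ⟨B₁, hB₁⟩ hblkℬ le_rfl
    (fun _ => hp) (fun h => absurd h (lt_irrefl p))
  rw [if_pos rfl] at hT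
  -- 𝒜' and the witnesses are disjoint subsets of the block universe
  have hdisj : Disjoint 𝒜' (witT p p m ℬ') := by
    rw [disjoint_left]
    intro X hX𝒜 hXw
    obtain ⟨_, _, B, hB, hXB⟩ := mem_witT.1 hXw
    obtain ⟨x, hx⟩ := hC' X hX𝒜 B hB
    rw [hXB] at hx
    exact notMem_empty _ hx
  have hsub : 𝒜' ∪ witT p p m ℬ'
      ⊆ (powersetCard p (range m)).filter (fun X => (X ∩ range p).Nonempty) := by
    intro X hX
    rcases mem_union.1 hX with hX | hX
    · refine mem_filter.2 ⟨mem_powersetCard.2 ⟨hb𝒜' X hX, hs𝒜' X hX⟩, ?_⟩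
      obtain ⟨x, hx⟩ := hC' X hX (range p) hrℬ
      exact ⟨x, hx⟩
    · rcases mem_witT.1 hX with ⟨⟨h1, h2⟩, h3, _⟩
      exact mem_filter.2 ⟨mem_powersetCard.2 ⟨h1, h2⟩, h3⟩
  have hcount := card_le_card hsub
  rw [card_union_of_disjoint hdisj] at hcount
  rw [card_blockuniv (by omega) p] at hcount
  omega







/-- rank of `x` inside a ground set `V` -/
def rk (V : Finset ℕ) (x : ℕ) : ℕ := (V.filter (· < x)).card

lemma rk_lt_rk {V : Finset ℕ} {x y : ℕ} (hx : x ∈ V) (hxy : x < y) : rk V x < rk V y := by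
  apply card_lt_card
  constructor
  · intro z hz
    rcases mem_filter.1 hz with ⟨h1, h2⟩
    exact mem_filter.2 ⟨h1, lt_trans h2 hxy⟩
  · intro hsub
    have : x ∈ V.filter (· < x) := hsub (mem_filter.2 ⟨hx, hxy⟩)
    exact lt_irrefl x (mem_filter.1 this).2

lemma rk_injOn {V : Finset ℕ} : Set.InjOn (rk V) ↑V := by
  intro a ha b hb heq
  rcases lt_trichotomy a b with h | h | h
  · exact absurd heq (rk_lt_rk ha h).ne
  · exact h
  · exact absurd heq.symm (rk_lt_rk hb h).ne

lemma rk_lt_card {V : Finset ℕ} {x : ℕ} (hx : x ∈ V) : rk V x < V.card := by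
  apply card_lt_card
  exact ⟨filter_subset _ _, fun hsub => lt_irrefl x (mem_filter.1 (hsub hx)).2⟩

lemma rk_image_card {V A : Finset ℕ} (h : A ⊆ V) : (A.image (rk V)).card = A.card :=
  card_image_of_injOn (rk_injOn.mono (by exact_mod_cast h))

lemma rk_image_bdd {V A : Finset ℕ} (h : A ⊆ V) : A.image (rk V) ⊆ range V.card := by
  intro z hz
  obtain ⟨x, hx, rfl⟩ := mem_image.1 hz
  exact mem_range.2 (rk_lt_card (h hx))

lemma rk_fam_card {V : Finset ℕ} {𝒞 : Finset (Finset ℕ)} (h : ∀ A ∈ 𝒞, A ⊆ V) :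
    (𝒞.image (fun A => A.image (rk V))).card = 𝒞.card := by
  apply card_image_of_injOn
  intro A hA B hB heq
  simp only [mem_coe] at hA hB
  have heq' : A.image (rk V) = B.image (rk V) := heq
  apply Finset.Subset.antisymm
  · intro x hx
    have : rk V x ∈ B.image (rk V) := heq' ▸ mem_image_of_mem _ hx
    obtain ⟨y, hy, hxy⟩ := mem_image.1 this
    rwa [rk_injOn (h B hB hy) (h A hA hx) hxy] at hy
  · intro x hx
    have : rk V x ∈ A.image (rk V) := heq' ▸ mem_image_of_mem _ hx
    obtain ⟨y, hy, hxy⟩ := mem_image.1 this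
    rwa [rk_injOn (h A hA hy) (h B hB hx) hxy] at hy

/-- Case B : a two-element cover -/
theorem coverCase (hr : 2 ≤ r) (hn : 2*r ≤ n) {𝒢 : Finset (Finset ℕ)}
    (hi : i < n) (hj : j < n) (hij : i ≠ j) (hsz : Sized r 𝒢) (hbd : Bdd n 𝒢)
    (hint : Cross 𝒢 𝒢) (hnt : ¬ ∃ x, ∀ G ∈ 𝒢, x ∈ G)
    (hcov : ∀ G ∈ 𝒢, i ∈ G ∨ j ∈ G) :
    𝒢.card ≤ (n-1).choose (r-1) - (n-r-1).choose (r-1) + 1 := by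
  classical
  set V : Finset ℕ := ((range n).erase i).erase j with hV
  have hjV : j ∈ (range n).erase i := mem_erase.2 ⟨hij.symm, mem_range.2 hj⟩
  have hVcard : V.card = n - 2 := by
    rw [hV, card_erase_of_mem hjV, card_erase_of_mem (mem_range.2 hi), card_range]
    omega
  have hmemV : ∀ x, x ∈ V ↔ (x ≠ j ∧ x ≠ i ∧ x < n) := by
    intro x
    rw [hV, mem_erase, mem_erase, mem_range]
  -- split
  have hsplit1 : (𝒢.filter (fun G => i ∈ G)).card + (𝒢.filter (fun G => ¬ i ∈ G)).card
      = 𝒢.card := card_filter_add_card_filter_not _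
  have hsplit2 : ((𝒢.filter (fun G => i ∈ G)).filter (fun G => j ∈ G)).card
      + ((𝒢.filter (fun G => i ∈ G)).filter (fun G => ¬ j ∈ G)).card
      = (𝒢.filter (fun G => i ∈ G)).card := card_filter_add_card_filter_not _
  -- the part containing both i and j
  have hboth : ((𝒢.filter (fun G => i ∈ G)).filter (fun G => j ∈ G)).card
      ≤ (n-2).choose (r-2) := by
    have h1 : ((𝒢.filter (fun G => i ∈ G)).filter (fun G => j ∈ G)).card
        ≤ (powersetCard (r-2) V).card := by
      apply card_le_card_of_injOn (fun G => (G.erase i).erase j)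
      · intro G hG
        rcases mem_filter.1 hG with ⟨hG1, hjG⟩
        rcases mem_filter.1 hG1 with ⟨hG𝒢, hiG⟩
        rw [mem_coe, mem_powersetCard]
        constructor
        · intro x hx
          rcases mem_erase.1 hx with ⟨hxj, hx1⟩
          rcases mem_erase.1 hx1 with ⟨hxi, hxG⟩
          exact (hmemV x).2 ⟨hxj, hxi, mem_range.1 (hbd G hG𝒢 hxG)⟩
        · rw [card_erase_of_mem (mem_erase.2 ⟨fun h => hij h.symm, hjG⟩),
            card_erase_of_mem hiG, hsz G hG𝒢]
          omega
      · intro G hG G' hG' heq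
        have heq' : (G.erase i).erase j = (G'.erase i).erase j := heq
        rw [mem_coe] at hG hG'
        rcases mem_filter.1 hG with ⟨hG1, hjG0⟩
        rcases mem_filter.1 hG1 with ⟨hG𝒢, hiG0⟩
        rcases mem_filter.1 hG' with ⟨hG1', hjG0'⟩
        rcases mem_filter.1 hG1' with ⟨hG𝒢', hiG0'⟩
        have hjG : j ∈ G.erase i := mem_erase.2 ⟨fun h => hij h.symm, hjG0⟩
        have hjG' : j ∈ G'.erase i := mem_erase.2 ⟨fun h => hij h.symm, hjG0'⟩
        have h2 : G.erase i = G'.erase i := by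
          rw [← insert_erase hjG, ← insert_erase hjG', heq']
        rw [← insert_erase hiG0, ← insert_erase hiG0', h2]
    rwa [card_powersetCard, hVcard] at h1
  -- the two cross-intersecting wings
  set 𝒜₀ : Finset (Finset ℕ) :=
    ((𝒢.filter (fun G => i ∈ G)).filter (fun G => ¬ j ∈ G)).image (fun G => G.erase i)
    with h𝒜₀
  set ℬ₀ : Finset (Finset ℕ) :=
    (𝒢.filter (fun G => ¬ i ∈ G)).image (fun G => G.erase j) with hℬ₀
  have h𝒜₀mem : ∀ A ∈ 𝒜₀, ∃ G ∈ 𝒢, i ∈ G ∧ j ∉ G ∧ A = G.erase i := by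
    intro A hA
    obtain ⟨G, hG, rfl⟩ := mem_image.1 hA
    rcases mem_filter.1 hG with ⟨hG1, hjG⟩
    rcases mem_filter.1 hG1 with ⟨hG𝒢, hiG⟩
    exact ⟨G, hG𝒢, hiG, hjG, rfl⟩
  have hℬ₀mem : ∀ B ∈ ℬ₀, ∃ G ∈ 𝒢, j ∈ G ∧ i ∉ G ∧ B = G.erase j := by
    intro B hB
    obtain ⟨G, hG, rfl⟩ := mem_image.1 hB
    rcases mem_filter.1 hG with ⟨hG𝒢, hiG⟩
    rcases hcov G hG𝒢 with h | h
    · exact absurd h hiG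
    · exact ⟨G, hG𝒢, h, hiG, rfl⟩
  have h𝒜₀sub : ∀ A ∈ 𝒜₀, A ⊆ V := by
    intro A hA
    obtain ⟨G, hG𝒢, hiG, hjG, rfl⟩ := h𝒜₀mem A hA
    intro x hx
    rcases mem_erase.1 hx with ⟨hxi, hxG⟩
    exact (hmemV x).2 ⟨fun h => hjG (h ▸ hxG), hxi, mem_range.1 (hbd G hG𝒢 hxG)⟩
  have hℬ₀sub : ∀ B ∈ ℬ₀, B ⊆ V := by
    intro B hB
    obtain ⟨G, hG𝒢, hjG, hiG, rfl⟩ := hℬ₀mem B hB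
    intro x hx
    rcases mem_erase.1 hx with ⟨hxj, hxG⟩
    exact (hmemV x).2 ⟨hxj, fun h => hiG (h ▸ hxG), mem_range.1 (hbd G hG𝒢 hxG)⟩
  have h𝒜₀card : 𝒜₀.card = ((𝒢.filter (fun G => i ∈ G)).filter (fun G => ¬ j ∈ G)).card := by
    apply card_image_of_injOn
    intro G hG G' hG' heq
    have heq' : G.erase i = G'.erase i := heq
    rw [mem_coe] at hG hG'
    rcases mem_filter.1 hG with ⟨hG1, _⟩
    rcases mem_filter.1 hG1 with ⟨_, hiG0⟩
    rcases mem_filter.1 hG' with ⟨hG1', _⟩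
    rcases mem_filter.1 hG1' with ⟨_, hiG0'⟩
    rw [← insert_erase hiG0, ← insert_erase hiG0', heq']
  have hℬ₀card : ℬ₀.card = (𝒢.filter (fun G => ¬ i ∈ G)).card := by
    apply card_image_of_injOn
    intro G hG G' hG' heq
    have heq' : G.erase j = G'.erase j := heq
    rw [mem_coe] at hG hG'
    rcases mem_filter.1 hG with ⟨hGm, hiG0⟩
    rcases mem_filter.1 hG' with ⟨hGm', hiG0'⟩
    have hjG : j ∈ G := by rcases hcov G hGm with h | h; exact absurd h hiG0; exact h
    have hjG' : j ∈ G' := by rcases hcov G' hGm' with h | h; exact absurd h hiG0'; exact h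
    rw [← insert_erase hjG, ← insert_erase hjG', heq']
  have h𝒜₀sz : Sized (r-1) 𝒜₀ := by
    intro A hA
    obtain ⟨G, hG𝒢, hiG, _, rfl⟩ := h𝒜₀mem A hA
    rw [card_erase_of_mem hiG, hsz G hG𝒢]
  have hℬ₀sz : Sized (r-1) ℬ₀ := by
    intro B hB
    obtain ⟨G, hG𝒢, hjG, _, rfl⟩ := hℬ₀mem B hB
    rw [card_erase_of_mem hjG, hsz G hG𝒢]
  have hcross : Cross 𝒜₀ ℬ₀ := by
    intro A hA B hB
    obtain ⟨G, hG𝒢, hiG, hjG, rfl⟩ := h𝒜₀mem A hA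
    obtain ⟨G', hG'𝒢, hjG', hiG', rfl⟩ := hℬ₀mem B hB
    obtain ⟨x, hx⟩ := hint G hG𝒢 G' hG'𝒢
    rcases mem_inter.1 hx with ⟨hx1, hx2⟩
    have hxi : x ≠ i := fun h => hiG' (h ▸ hx2)
    have hxj : x ≠ j := fun h => hjG (h ▸ hx1)
    exact ⟨x, mem_inter.2 ⟨mem_erase.2 ⟨hxi, hx1⟩, mem_erase.2 ⟨hxj, hx2⟩⟩⟩
  have h𝒜₀ne : 𝒜₀.Nonempty := by
    rw [h𝒜₀]
    rcases eq_empty_or_nonempty ((𝒢.filter (fun G => i ∈ G)).filter (fun G => ¬ j ∈ G))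
      with he | hne
    · exfalso
      apply hnt
      refine ⟨j, fun G hG => ?_⟩
      rcases hcov G hG with h | h
      · by_contra hjG
        have : G ∈ (𝒢.filter (fun G => i ∈ G)).filter (fun G => ¬ j ∈ G) :=
          mem_filter.2 ⟨mem_filter.2 ⟨hG, h⟩, hjG⟩
        rw [he] at this
        exact notMem_empty _ this
      · exact h
    · exact hne.image _
  have hℬ₀ne : ℬ₀.Nonempty := by
    rw [hℬ₀]
    rcases eq_empty_or_nonempty (𝒢.filter (fun G => ¬ i ∈ G)) with he | hne
    · exfalso
      apply hnt
      refine ⟨i, fun G hG => ?_⟩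
      by_contra hiG
      have : G ∈ 𝒢.filter (fun G => ¬ i ∈ G) := mem_filter.2 ⟨hG, hiG⟩
      rw [he] at this
      exact notMem_empty _ this
    · exact hne.image _
  -- relabel to range (n-2) and apply lemma L
  have hLL : 𝒜₀.card + ℬ₀.card ≤ (n-2).choose (r-1) - (n-r-1).choose (r-1) + 1 := by
    have h𝒜c := rk_fam_card h𝒜₀sub
    have hℬc := rk_fam_card hℬ₀sub
    have hmain := lemL (m := n-2) (p := r-1) (by omega)
      (𝒜 := 𝒜₀.image (fun A => A.image (rk V)))
      (ℬ := ℬ₀.image (fun A => A.image (rk V)))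
      ?_ ?_ ?_ ?_ ?_ ?_ ?_
    · rw [h𝒜c, hℬc] at hmain
      have he : n - 2 - (r-1) = n - r - 1 := by omega
      rwa [he] at hmain
    · intro A hA B hB
      obtain ⟨A₀, hA₀, rfl⟩ := mem_image.1 hA
      obtain ⟨B₀, hB₀, rfl⟩ := mem_image.1 hB
      obtain ⟨x, hx⟩ := hcross A₀ hA₀ B₀ hB₀
      rcases mem_inter.1 hx with ⟨hx1, hx2⟩
      exact ⟨rk V x, mem_inter.2 ⟨mem_image_of_mem _ hx1, mem_image_of_mem _ hx2⟩⟩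
    · intro A hA
      obtain ⟨A₀, hA₀, rfl⟩ := mem_image.1 hA
      rw [rk_image_card (h𝒜₀sub A₀ hA₀)]
      exact h𝒜₀sz A₀ hA₀
    · intro B hB
      obtain ⟨B₀, hB₀, rfl⟩ := mem_image.1 hB
      rw [rk_image_card (hℬ₀sub B₀ hB₀)]
      exact hℬ₀sz B₀ hB₀
    · intro A hA
      obtain ⟨A₀, hA₀, rfl⟩ := mem_image.1 hA
      have := rk_image_bdd (h𝒜₀sub A₀ hA₀)
      rwa [hVcard] at this
    · intro B hB
      obtain ⟨B₀, hB₀, rfl⟩ := mem_image.1 hB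
      have := rk_image_bdd (hℬ₀sub B₀ hB₀)
      rwa [hVcard] at this
    · exact h𝒜₀ne.image _
    · exact hℬ₀ne.image _
  -- assemble
  have hpas : (n-1).choose (r-1) = (n-2).choose (r-2) + (n-2).choose (r-1) := by
    have e1 : n - 1 = (n-2) + 1 := by omega
    have e2 : r - 1 = (r-2) + 1 := by omega
    rw [e1, e2, Nat.choose_succ_succ]
  have hmono : (n-r-1).choose (r-1) ≤ (n-2).choose (r-1) :=
    Nat.choose_le_choose _ (by omega)
  rw [h𝒜₀card, hℬ₀card] at hLL
  omega







theorem caseC (hr : 2 ≤ r) (hlt : 2*r < n)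
    (IH1 : ∀ r' (𝒜' : Finset (Finset ℕ)), 2 ≤ r' → 2*r' ≤ n-1 → Sized r' 𝒜' →
      Bdd (n-1) 𝒜' → Cross 𝒜' 𝒜' → (¬ ∃ x, ∀ A ∈ 𝒜', x ∈ A) →
      𝒜'.card ≤ (n-1-1).choose (r'-1) - (n-1-r'-1).choose (r'-1) + 1)
    (hsz : Sized r 𝒢) (hbd : Bdd n 𝒢) (hint : Cross 𝒢 𝒢)
    (hnt : ¬ ∃ x, ∀ G ∈ 𝒢, x ∈ G) (hSh : Shifted 𝒢) :
    𝒢.card ≤ (n-1).choose (r-1) - (n-r-1).choose (r-1) + 1 := by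
  classical
  have hne : 𝒢.Nonempty := by
    rcases eq_empty_or_nonempty 𝒢 with rfl | h
    · exact absurd ⟨0, fun A hA => absurd hA (notMem_empty A)⟩ hnt
    · exact h
  obtain ⟨G₁, hG₁⟩ := hne
  have hrange : range r ∈ 𝒢.filter (fun G => ¬ (n-1) ∈ G) := by
    have h1 := shifted_range_mem hSh hG₁
    rw [hsz G₁ hG₁] at h1
    refine mem_filter.2 ⟨h1, ?_⟩
    rw [mem_range]; omega
  by_cases h𝒦triv : ∃ y, ∀ K ∈ 𝒢.filter (fun G => ¬ (n-1) ∈ G), y ∈ K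
  · -- the part below the top is a star : two-element cover {y, n-1}
    obtain ⟨y, hy⟩ := h𝒦triv
    have hyr : y < r := mem_range.1 (hy _ hrange)
    refine coverCase hr (by omega) (show y < n by omega) (show n-1 < n by omega)
      (show y ≠ n-1 by omega) hsz hbd hint hnt ?_
    intro G hG
    by_cases ht : (n-1) ∈ G
    · exact Or.inr ht
    · exact Or.inl (hy G (mem_filter.2 ⟨hG, ht⟩))
  · -- 𝒦 is nontrivial : apply induction at (n-1, r)
    have h𝒦 : (𝒢.filter (fun G => ¬ (n-1) ∈ G)).card
        ≤ (n-2).choose (r-1) - (n-r-2).choose (r-1) + 1 := by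
      have h1 := IH1 r (𝒢.filter (fun G => ¬ (n-1) ∈ G)) hr (by omega)
        (fun A hA => hsz A (mem_filter.1 hA).1)
        (by
          intro A hA x hx
          rcases mem_filter.1 hA with ⟨hA𝒢, htA⟩
          have h2 := mem_range.1 (hbd A hA𝒢 hx)
          have h3 : x ≠ n - 1 := fun hxe => htA (hxe ▸ hx)
          exact mem_range.2 (by omega))
        (fun A hA B hB => hint A (mem_filter.1 hA).1 B (mem_filter.1 hB).1)
        h𝒦triv
      have e1 : n - 1 - 1 = n - 2 := by omega
      have e2 : n - 1 - r - 1 = n - r - 2 := by omega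
      rwa [e1, e2] at h1
    -- bound the slice 𝒟
    have h𝒟bound : ((𝒢.filter (fun G => (n-1) ∈ G)).image (fun A => A.erase (n-1))).card
        ≤ (n-2).choose (r-2) - (n-r-2).choose (r-2) := by
      by_cases h𝒟e : (𝒢.filter (fun G => (n-1) ∈ G)).image (fun A => A.erase (n-1)) = ∅
      · rw [h𝒟e]; simp
      · have h𝒟ne := nonempty_of_ne_empty h𝒟e
        have h𝒟S : Shifted ((𝒢.filter (fun G => (n-1) ∈ G)).image (fun A => A.erase (n-1))) :=
          shifted_slice (m := n) hSh hbd
        have h𝒟B : Bdd (n-1) ((𝒢.filter (fun G => (n-1) ∈ G)).image (fun A => A.erase (n-1))) :=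
          bdd_slice (m := n) hbd
        have h𝒟sz : Sized (r-1) ((𝒢.filter (fun G => (n-1) ∈ G)).image (fun A => A.erase (n-1))) := by
          intro D hD
          obtain ⟨A, hA, rfl⟩ := mem_image.1 hD
          rcases mem_filter.1 hA with ⟨hA𝒢, htA⟩
          rw [card_erase_of_mem htA, hsz A hA𝒢]
        have h𝒟mem : ∀ D ∈ (𝒢.filter (fun G => (n-1) ∈ G)).image (fun A => A.erase (n-1)),
            ∃ A ∈ 𝒢, (n-1) ∈ A ∧ D = A.erase (n-1) := by
          intro D hD
          obtain ⟨A, hA, rfl⟩ := mem_image.1 hD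
          rcases mem_filter.1 hA with ⟨hA𝒢, htA⟩
          exact ⟨A, hA𝒢, htA, rfl⟩
        have h𝒟int : Cross ((𝒢.filter (fun G => (n-1) ∈ G)).image (fun A => A.erase (n-1)))
            ((𝒢.filter (fun G => (n-1) ∈ G)).image (fun A => A.erase (n-1))) := by
          intro D hD D' hD'
          obtain ⟨A, hA𝒢, htA, rfl⟩ := h𝒟mem _ hD
          obtain ⟨A', hA'𝒢, htA', rfl⟩ := h𝒟mem _ hD'
          by_contra hcon
          rw [not_nonempty_iff_eq_empty] at hcon
          have hcard1 : (A.erase (n-1)).card = r - 1 := by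
            rw [card_erase_of_mem htA, hsz A hA𝒢]
          have hsubne : ¬ (range (n-1) ⊆ (A.erase (n-1) ∪ A')) := by
            intro hsub
            have h1 := card_le_card hsub
            have h2 := card_union_le (A.erase (n-1)) A'
            rw [card_range] at h1
            have h3 := hsz A' hA'𝒢
            omega
          obtain ⟨i, hiR, hiU⟩ := not_subset.1 hsubne
          have hiA' : i ∉ A' := fun h => hiU (mem_union_right _ h)
          have hiAe : i ∉ A.erase (n-1) := fun h => hiU (mem_union_left _ h)
          have hit : i < n - 1 := mem_range.1 hiR
          have hiA : i ∉ A := fun h => hiAe (mem_erase.2 ⟨by omega, h⟩)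
          have hG' : insert i (A.erase (n-1)) ∈ 𝒢 := hSh A hA𝒢 (n-1) htA i hit hiA
          obtain ⟨x, hx⟩ := hint _ hG' A' hA'𝒢
          rcases mem_inter.1 hx with ⟨hx1, hx2⟩
          rcases mem_insert.1 hx1 with rfl | hx1'
          · exact hiA' hx2
          · have hxt : x ≠ n - 1 := (mem_erase.1 hx1').1
            have : x ∈ (A.erase (n-1)) ∩ (A'.erase (n-1)) :=
              mem_inter.2 ⟨hx1', mem_erase.2 ⟨hxt, hx2⟩⟩
            rw [hcon] at this
            exact notMem_empty _ this
        by_cases h𝒟triv : ∃ y, ∀ D ∈ (𝒢.filter (fun G => (n-1) ∈ G)).image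
            (fun A => A.erase (n-1)), y ∈ D
        · -- trivial slice : star at 0 meeting Ico 1 (r+1)
          have h0 : ∀ D ∈ (𝒢.filter (fun G => (n-1) ∈ G)).image (fun A => A.erase (n-1)),
              0 ∈ D := by
            obtain ⟨y, hy⟩ := h𝒟triv
            intro D hD
            by_contra h0D
            rcases eq_or_ne y 0 with rfl | hy0
            · exact h0D (hy D hD)
            · have hyD := hy D hD
              have hD' : insert 0 (D.erase y) ∈ _ := h𝒟S D hD y hyD 0 (by omega) h0D
              have h2 := hy _ hD'
              rcases mem_insert.1 h2 with h | h
              · exact hy0 h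
              · exact (mem_erase.1 h).1 rfl
          obtain ⟨G₀, hG₀, h0G₀⟩ : ∃ G ∈ 𝒢, 0 ∉ G := by
            by_contra hc
            push_neg at hc
            exact hnt ⟨0, hc⟩
          have hB' : Ico 1 (r+1) ∈ 𝒢 := by
            have h2 := shifted_Ico_mem hSh hG₀ h0G₀
            rwa [hsz G₀ hG₀] at h2
          have hblkD : ∀ D ∈ (𝒢.filter (fun G => (n-1) ∈ G)).image (fun A => A.erase (n-1)),
              (D ∩ Ico 1 (r+1)).Nonempty := by
            intro D hD
            obtain ⟨A, hA𝒢, htA, rfl⟩ := h𝒟mem _ hD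
            obtain ⟨x, hx⟩ := hint A hA𝒢 _ hB'
            rcases mem_inter.1 hx with ⟨hx1, hx2⟩
            have hxr := mem_Ico.1 hx2
            refine ⟨x, mem_inter.2 ⟨mem_erase.2 ⟨by omega, hx1⟩, hx2⟩⟩
          have hcount : ((𝒢.filter (fun G => (n-1) ∈ G)).image (fun A => A.erase (n-1))).card
              ≤ ((powersetCard (r-2) (Ico 1 (n-1))).filter
                  (fun E => (E ∩ Ico 1 (r+1)).Nonempty)).card := by
            apply card_le_card_of_injOn (fun D => D.erase 0)
            · intro D hD
              refine mem_filter.2 ⟨mem_powersetCard.2 ⟨?_, ?_⟩, ?_⟩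
              · intro x hx
                rcases mem_erase.1 hx with ⟨hx0, hxD⟩
                have := mem_range.1 (h𝒟B D hD hxD)
                exact mem_Ico.2 ⟨by omega, by omega⟩
              · rw [card_erase_of_mem (h0 D hD), h𝒟sz D hD]
                omega
              · obtain ⟨x, hx⟩ := hblkD D hD
                rcases mem_inter.1 hx with ⟨hx1, hx2⟩
                have hx1' := mem_Ico.1 hx2
                exact ⟨x, mem_inter.2 ⟨mem_erase.2 ⟨by omega, hx1⟩, hx2⟩⟩
            · intro D hD D' hD' heq
              have heq' : D.erase 0 = D'.erase 0 := heq
              rw [mem_coe] at hD hD'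
              rw [← insert_erase (h0 D hD), ← insert_erase (h0 D' hD'), heq']
          have hΩ : ((powersetCard (r-2) (Ico 1 (n-1))).filter
              (fun E => (E ∩ Ico 1 (r+1)).Nonempty)).card
              = (n-2).choose (r-2) - (n-r-2).choose (r-2) := by
            have hneg : (powersetCard (r-2) (Ico 1 (n-1))).filter
                (fun E => ¬ (E ∩ Ico 1 (r+1)).Nonempty)
                = powersetCard (r-2) (Ico (r+1) (n-1)) := by
              ext E
              simp only [mem_filter, mem_powersetCard, not_nonempty_iff_eq_empty]
              constructor
              · rintro ⟨⟨hsub, hcard⟩, hempty⟩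
                refine ⟨fun x hx => ?_, hcard⟩
                have hx1 := mem_Ico.1 (hsub hx)
                have hx2 : ¬ (1 ≤ x ∧ x < r + 1) := by
                  intro hc
                  have : x ∈ E ∩ Ico 1 (r+1) := mem_inter.2 ⟨hx, mem_Ico.2 hc⟩
                  rw [hempty] at this
                  exact notMem_empty _ this
                exact mem_Ico.2 ⟨by omega, hx1.2⟩
              · rintro ⟨hsub, hcard⟩
                refine ⟨⟨fun x hx => ?_, hcard⟩, ?_⟩
                · have := mem_Ico.1 (hsub hx)
                  exact mem_Ico.2 ⟨by omega, this.2⟩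
                · rw [eq_empty_iff_forall_notMem]
                  intro x hx
                  rcases mem_inter.1 hx with ⟨hx1, hx2⟩
                  have h1 := mem_Ico.1 (hsub hx1)
                  have h2 := mem_Ico.1 hx2
                  omega
            have htot := card_filter_add_card_filter_not
              (s := powersetCard (r-2) (Ico 1 (n-1)))
              (fun E => (E ∩ Ico 1 (r+1)).Nonempty)
            rw [hneg, card_powersetCard, card_powersetCard, Nat.card_Ico, Nat.card_Ico] at htot
            have e1 : n - 1 - 1 = n - 2 := by omega
            have e2 : n - 1 - (r+1) = n - r - 2 := by omega
            rw [e1, e2] at htot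
            have hm : (n-r-2).choose (r-2) ≤ (n-2).choose (r-2) :=
              Nat.choose_le_choose _ (by omega)
            omega
          omega
        · -- nontrivial slice : induction at (n-1, r-1)
          have hr3 : 3 ≤ r := by
            by_contra hcon
            have hr2 : r = 2 := by omega
            obtain ⟨D₀, hD₀⟩ := h𝒟ne
            apply h𝒟triv
            have hc : D₀.card = 1 := by rw [h𝒟sz D₀ hD₀]; omega
            obtain ⟨d, hd⟩ := card_eq_one.1 hc
            refine ⟨d, fun D hD => ?_⟩
            obtain ⟨x, hx⟩ := h𝒟int D hD D₀ hD₀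
            rcases mem_inter.1 hx with ⟨hx1, hx2⟩
            rw [hd, mem_singleton] at hx2
            exact hx2 ▸ hx1
          have h1 := IH1 (r-1) _ (by omega) (by omega) h𝒟sz h𝒟B h𝒟int h𝒟triv
          have e1 : n - 1 - 1 = n - 2 := by omega
          have e2 : n - 1 - (r-1) - 1 = n - r - 1 := by omega
          have e3 : r - 1 - 1 = r - 2 := by omega
          rw [e1, e2, e3] at h1
          have hPas : (n-r-1).choose (r-2) = (n-r-2).choose (r-3) + (n-r-2).choose (r-2) := by
            have f1 : n - r - 1 = (n-r-2) + 1 := by omega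
            have f2 : r - 2 = (r-3) + 1 := by omega
            rw [f1, f2, Nat.choose_succ_succ]
          have hpos : 1 ≤ (n-r-2).choose (r-3) := Nat.choose_pos (by omega)
          have hm : (n-r-1).choose (r-2) ≤ (n-2).choose (r-2) :=
            Nat.choose_le_choose _ (by omega)
          omega
    -- assemble
    have hsplit : (𝒢.filter (fun G => (n-1) ∈ G)).card
        + (𝒢.filter (fun G => ¬ (n-1) ∈ G)).card = 𝒢.card :=
      card_filter_add_card_filter_not _
    have h𝒟card : ((𝒢.filter (fun G => (n-1) ∈ G)).image (fun A => A.erase (n-1))).card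
        = (𝒢.filter (fun G => (n-1) ∈ G)).card := card_slice (m := n)
    have hpas1 : (n-1).choose (r-1) = (n-2).choose (r-2) + (n-2).choose (r-1) := by
      have e1 : n - 1 = (n-2) + 1 := by omega
      have e2 : r - 1 = (r-2) + 1 := by omega
      rw [e1, e2, Nat.choose_succ_succ]
    have hpas2 : (n-r-1).choose (r-1) = (n-r-2).choose (r-2) + (n-r-2).choose (r-1) := by
      have e1 : n - r - 1 = (n-r-2) + 1 := by omega
      have e2 : r - 1 = (r-2) + 1 := by omega
      rw [e1, e2, Nat.choose_succ_succ]
    have hm1 : (n-r-2).choose (r-1) ≤ (n-2).choose (r-1) :=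
      Nat.choose_le_choose _ (by omega)
    have hm2 : (n-r-2).choose (r-2) ≤ (n-2).choose (r-2) :=
      Nat.choose_le_choose _ (by omega)
    omega







lemma attachFin_val_image {A : Finset ℕ} (h : ∀ x ∈ A, x < n) :
    (A.attachFin h).image Fin.val = A := by
  ext x
  simp only [mem_image]
  constructor
  · rintro ⟨a, ha, rfl⟩
    exact (mem_attachFin h).1 ha
  · intro hx
    exact ⟨⟨x, h x hx⟩, (mem_attachFin h).2 hx, rfl⟩

lemma ekr_nat (hr : 1 ≤ r) (h2 : 2*r ≤ n) (hs : Sized r 𝒜) (hb : Bdd n 𝒜)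
    (hi : Cross 𝒜 𝒜) : 𝒜.card ≤ (n-1).choose (r-1) := by
  classical
  set f : {A // A ∈ 𝒜} → Finset (Fin n) :=
    fun A => A.1.attachFin (fun x hx => mem_range.1 (hb A.1 A.2 hx)) with hf
  set 𝒜' : Finset (Finset (Fin n)) := 𝒜.attach.image f with h𝒜'
  have hval : ∀ A : {A // A ∈ 𝒜}, (f A).image Fin.val = A.1 := fun A =>
    attachFin_val_image _
  have hcard : 𝒜'.card = 𝒜.card := by
    rw [h𝒜', card_image_of_injOn, card_attach]
    intro A _ B _ hAB
    have : (f A).image Fin.val = (f B).image Fin.val := by rw [hAB]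
    rw [hval, hval] at this
    exact Subtype.ext this
  have hmem : ∀ C ∈ 𝒜', ∃ A : {A // A ∈ 𝒜}, C = f A := by
    intro C hC
    obtain ⟨A, _, rfl⟩ := mem_image.1 hC
    exact ⟨A, rfl⟩
  have hint' : (↑𝒜' : Set (Finset (Fin n))).Intersecting := by
    intro a ha b hb'
    rw [mem_coe] at ha hb'
    obtain ⟨A, rfl⟩ := hmem a ha
    obtain ⟨B, rfl⟩ := hmem b hb'
    obtain ⟨x, hx⟩ := hi A.1 A.2 B.1 B.2
    rcases mem_inter.1 hx with ⟨hx1, hx2⟩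
    intro hd
    have hxa : (⟨x, mem_range.1 (hb A.1 A.2 hx1)⟩ : Fin n) ∈ f A :=
      (mem_attachFin _).2 hx1
    have hxb : (⟨x, mem_range.1 (hb A.1 A.2 hx1)⟩ : Fin n) ∈ f B :=
      (mem_attachFin _).2 hx2
    exact (Finset.disjoint_left.1 hd hxa) hxb
  have hsz' : (↑𝒜' : Set (Finset (Fin n))).Sized r := by
    intro a ha
    rw [mem_coe] at ha
    obtain ⟨A, rfl⟩ := hmem a ha
    rw [hf]
    simpa [card_attachFin] using hs A.1 A.2
  have := Finset.erdos_ko_rado hint' hsz' (Nat.le_div_iff_mul_le (by norm_num) |>.2 (by omega))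
  omega

theorem HMnat : ∀ n, ∀ r, ∀ 𝒜 : Finset (Finset ℕ), 2 ≤ r → 2*r ≤ n → Sized r 𝒜 →
    Bdd n 𝒜 → Cross 𝒜 𝒜 → (¬ ∃ x, ∀ A ∈ 𝒜, x ∈ A) →
    𝒜.card ≤ (n-1).choose (r-1) - (n-r-1).choose (r-1) + 1 := by
  intro n
  induction n using Nat.strong_induction_on with
  | _ n IHn =>
    intro r 𝒜 hr h2 hsz hbd hint hnt
    rcases eq_or_lt_of_le h2 with heq | hlt
    · -- n = 2r : Erdős–Ko–Rado suffices
      have hEKR := ekr_nat (by omega) h2 hsz hbd hint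
      have h1 : n - r - 1 = r - 1 := by omega
      rw [h1, Nat.choose_self]
      omega
    · -- n > 2r : shifting loop
      have loop : ∀ N, ∀ 𝒢 : Finset (Finset ℕ), meas 𝒢 < N → Sized r 𝒢 → Bdd n 𝒢 →
          Cross 𝒢 𝒢 → (¬ ∃ x, ∀ A ∈ 𝒢, x ∈ A) →
          𝒢.card ≤ (n-1).choose (r-1) - (n-r-1).choose (r-1) + 1 := by
        intro N
        induction N with
        | zero => intro 𝒢 h; omega
        | succ N IHN =>
          intro 𝒢 hmeas hsz' hbd' hint' hnt'
          by_cases hSh : Shifted 𝒢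
          · exact caseC hr hlt (fun r' 𝒜' a b c d e g =>
              IHn (n-1) (by omega) r' 𝒜' a b c d e g) hsz' hbd' hint' hnt' hSh
          · rw [Shifted] at hSh
            push_neg at hSh
            obtain ⟨A, hA, j, hjA, i, hij, hiA, hnm⟩ := hSh
            have hjn : j < n := mem_range.1 (hbd' A hA hjA)
            have hin : i < n := lt_trans hij hjn
            by_cases htriv : ∃ z, ∀ G ∈ comp i j 𝒢, z ∈ G
            · obtain ⟨z, hz⟩ := htriv
              exact coverCase hr (by omega) hin hjn hij.ne hsz' hbd' hint' hnt'
                (cover_of_comp_trivial hnt' hz)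
            · have hml := meas_comp_lt hij hA hjA hiA hnm
              have := IHN (comp i j 𝒢) (by omega) (comp_sized hij.ne hsz')
                (comp_bdd hin hbd') (comp_cross hint') htriv
              rwa [comp_card hij.ne] at this
      exact loop (meas 𝒜 + 1) 𝒜 (by omega) hsz hbd hint hnt



end HM

/-- **Hilton–Milner theorem.** If `2 ≤ r ≤ n/2` and `𝒜` is a pairwise
intersecting family of `r`-element subsets of an `n`-element set with no
common element, then `|𝒜| ≤ C(n-1,r-1) - C(n-r-1,r-1) + 1`. -/
theorem hilton_milner (n r : ℕ) (hr2 : 2 ≤ r) (hr : 2 * r ≤ n)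
    (𝒜 : Finset (Finset (Fin n)))
    (hcard : ∀ A ∈ 𝒜, A.card = r)
    (hint : ∀ A ∈ 𝒜, ∀ B ∈ 𝒜, (A ∩ B).Nonempty)
    (hnc : ¬ ∃ x : Fin n, ∀ A ∈ 𝒜, x ∈ A) :
    𝒜.card ≤ (n - 1).choose (r - 1) - (n - r - 1).choose (r - 1) + 1 := by
  classical
  rcases Finset.eq_empty_or_nonempty 𝒜 with rfl | hne
  · simp
  set 𝒜' : Finset (Finset ℕ) := 𝒜.image (fun A => A.image Fin.val) with h𝒜'
  have hcard' : 𝒜'.card = 𝒜.card := by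
    rw [h𝒜']
    apply Finset.card_image_of_injective
    exact Finset.image_injective Fin.val_injective
  have hmem' : ∀ C ∈ 𝒜', ∃ A ∈ 𝒜, C = A.image Fin.val := by
    intro C hC
    obtain ⟨A, hA, rfl⟩ := Finset.mem_image.1 hC
    exact ⟨A, hA, rfl⟩
  have h1 := HM.HMnat n r 𝒜' hr2 hr
    (by
      intro C hC
      obtain ⟨A, hA, rfl⟩ := hmem' C hC
      rw [Finset.card_image_of_injective _ Fin.val_injective]
      exact hcard A hA)
    (by
      intro C hC
      obtain ⟨A, hA, rfl⟩ := hmem' C hC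
      intro x hx
      obtain ⟨a, _, rfl⟩ := Finset.mem_image.1 hx
      exact Finset.mem_range.2 a.isLt)
    (by
      intro C hC D hD
      obtain ⟨A, hA, rfl⟩ := hmem' C hC
      obtain ⟨B, hB, rfl⟩ := hmem' D hD
      obtain ⟨x, hx⟩ := hint A hA B hB
      rcases Finset.mem_inter.1 hx with ⟨hx1, hx2⟩
      exact ⟨x.val, Finset.mem_inter.2
        ⟨Finset.mem_image_of_mem _ hx1, Finset.mem_image_of_mem _ hx2⟩⟩)
    (by
      rintro ⟨x, hx⟩
      obtain ⟨A₀, hA₀⟩ := hne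
      have hxA₀ := hx _ (Finset.mem_image_of_mem _ hA₀)
      obtain ⟨a₀, _, rfl⟩ := Finset.mem_image.1 hxA₀
      apply hnc
      refine ⟨a₀, fun A hA => ?_⟩
      have := hx _ (Finset.mem_image_of_mem _ hA)
      obtain ⟨a, ha, haa⟩ := Finset.mem_image.1 this
      rwa [Fin.val_injective haa] at ha)
  omega
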